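/- arXiv:2306.13739 — 8 statements merged into one kernel-verified Lean document; each statement's English description precedes it below -/
import Mathlib

section
/- Let k > k′ > 0 and n ≥ k. There exists a k-local function f : {0,1}^n → ℝ with max_x |f(x)| ≤ 1 such that for every k′-local function g : {0,1}^n → ℝ, max_{x ∈ {0,1}^n} |f(x) − g(x)| ≥ 2^{−k′}. -/
/-- A function `f : {0,1}^n → ℝ` is `k`-local if it is a finite sum of functions
each of which depends on at most `k` of the `n` Boolean input coordinates. -/
def IsKLocal {n : ℕ} (k : ℕ) (f : (Fin n → Bool) → ℝ) : Prop :=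
  ∃ (m : ℕ) (g : Fin m → (Fin n → Bool) → ℝ) (S : Fin m → Finset (Fin n)),
    (∀ i, (S i).card ≤ k) ∧
    (∀ i, ∀ x y : Fin n → Bool, (∀ j ∈ S i, x j = y j) → g i x = g i y) ∧
    (∀ x, f x = ∑ i, g i x)

lemma flip_involutive {n : ℕ} (j : Fin n) :
    Function.Involutive (fun x : Fin n → Bool => Function.update x j (!x j)) := by
  intro x
  simp only [Function.update_self]
  rw [Function.update_idem, Bool.not_not, Function.update_eq_self]

lemma flip_sum_zero {n : ℕ} (j : Fin n) (h : (Fin n → Bool) → ℝ)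
    (H : ∀ x, h (Function.update x j (!x j)) = - h x) : ∑ x, h x = 0 := by
  set e := Function.Involutive.toPerm _ (flip_involutive j) with he
  have h1 : ∑ x, h x = ∑ x, h (e x) :=
    (Fintype.sum_equiv e _ _ (fun x => rfl)).symm
  have h2 : ∑ x, h (e x) = ∑ x, - h x := by
    apply Fintype.sum_congr
    intro x
    exact H x
  rw [Finset.sum_neg_distrib] at h2
  have := h1.trans h2
  linarith

/-- For `k > k′ > 0` and `n ≥ k`, there exists a `k`-local function `f : {0,1}^n → ℝ`
with `max_x |f(x)| ≤ 1` such that every `k′`-local function `g` satisfies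
`max_x |f(x) − g(x)| ≥ 2^{−k′}`. -/
theorem stmt1 {n k k' : ℕ} (hk' : 0 < k') (hkk' : k' < k) (hn : k ≤ n) :
    ∃ f : (Fin n → Bool) → ℝ, IsKLocal k f ∧ (∀ x, |f x| ≤ 1) ∧
      ∀ g : (Fin n → Bool) → ℝ, IsKLocal k' g →
        ∃ x, (2 : ℝ) ^ (-(k' : ℤ)) ≤ |f x - g x| := by
  classical
  set T : Finset (Fin n) := Finset.image (Fin.castLE hn) Finset.univ with hT
  have hTcard : T.card = k := by
    rw [hT, Finset.card_image_of_injective _ (Fin.castLE_injective hn)]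
    simp
  set f : (Fin n → Bool) → ℝ := fun x => ∏ i ∈ T, (if x i then (-1 : ℝ) else 1) with hf
  have hfabs : ∀ x, |f x| = 1 := by
    intro x
    rw [hf]
    simp only [Finset.abs_prod]
    rw [Finset.prod_eq_one]
    intro i _
    by_cases h : x i <;> simp [h]
  have hfsq : ∀ x, f x * f x = 1 := by
    intro x
    have := hfabs x
    nlinarith [abs_nonneg (f x), sq_abs (f x)]
  -- f flips sign when a coordinate in T is flipped
  have hflip : ∀ (j : Fin n), j ∈ T → ∀ x, f (Function.update x j (!x j)) = - f x := by
    intro j hj x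
    rw [hf]
    simp only
    rw [← Finset.mul_prod_erase T _ hj, ← Finset.mul_prod_erase T
      (fun i => if x i then (-1:ℝ) else 1) hj]
    have h1 : ∏ i ∈ T.erase j, (if (Function.update x j (!x j)) i then (-1:ℝ) else 1)
        = ∏ i ∈ T.erase j, (if x i then (-1:ℝ) else 1) := by
      apply Finset.prod_congr rfl
      intro i hi
      rw [Function.update_of_ne (Finset.ne_of_mem_erase hi)]
    rw [h1, Function.update_self]
    by_cases h : x j <;> simp [h]
  refine ⟨f, ⟨1, fun _ => f, fun _ => T, ?_, ?_, ?_⟩, fun x => le_of_eq (hfabs x), ?_⟩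
  · intro i; rw [hTcard]
  · intro i x y hxy
    rw [hf]
    exact Finset.prod_congr rfl (fun j hj => by rw [hxy j hj])
  · intro x; simp
  · rintro g ⟨m, gi, S, hScard, hSdep, hgsum⟩
    -- ∑_x f x * g x = 0
    have horth : ∑ x : Fin n → Bool, f x * g x = 0 := by
      have : ∀ i : Fin m, ∑ x : Fin n → Bool, f x * gi i x = 0 := by
        intro i
        -- pick j ∈ T \ S i
        have hnotsub : ¬ T ⊆ S i := by
          intro hsub
          have h2 := Finset.card_le_card hsub
          have h3 := hScard i
          omega
        obtain ⟨j, hjT, hjS⟩ := Finset.not_subset.mp hnotsub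
        apply flip_sum_zero j
        intro x
        have hg : gi i (Function.update x j (!x j)) = gi i x := by
          apply hSdep i
          intro l hl
          exact Function.update_of_ne (fun h : l = j => hjS (h ▸ hl)) _ _
        rw [hg, hflip j hjT x]
        ring
      calc ∑ x : Fin n → Bool, f x * g x
          = ∑ x : Fin n → Bool, ∑ i : Fin m, f x * gi i x := by
            apply Fintype.sum_congr; intro x; rw [hgsum x, Finset.mul_sum]
        _ = ∑ i : Fin m, ∑ x : Fin n → Bool, f x * gi i x := Finset.sum_comm
        _ = 0 := by simp [this]
    -- ∑_x f x * (f x - g x) = 2^n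
    have hsum : ∑ x : Fin n → Bool, f x * (f x - g x) = (Fintype.card (Fin n → Bool) : ℝ) := by
      have : ∀ x : Fin n → Bool, f x * (f x - g x) = f x * f x - f x * g x := fun x => by ring
      rw [Fintype.sum_congr _ _ this, Finset.sum_sub_distrib, horth, sub_zero]
      rw [Fintype.sum_congr _ _ hfsq]
      simp
    -- so some x has f x * (f x - g x) ≥ 1
    have hex : ∃ x : Fin n → Bool, 1 ≤ f x * (f x - g x) := by
      by_contra hc
      push_neg at hc
      have : ∑ x : Fin n → Bool, f x * (f x - g x) <
          ∑ _x : Fin n → Bool, (1 : ℝ) :=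
        Finset.sum_lt_sum_of_nonempty Finset.univ_nonempty (fun x _ => hc x)
      rw [hsum] at this
      simp at this
    obtain ⟨x, hx⟩ := hex
    refine ⟨x, ?_⟩
    have h1 : (1 : ℝ) ≤ |f x - g x| := by
      have := abs_mul (f x) (f x - g x)
      calc (1:ℝ) ≤ f x * (f x - g x) := hx
        _ ≤ |f x * (f x - g x)| := le_abs_self _
        _ = |f x| * |f x - g x| := abs_mul _ _
        _ = |f x - g x| := by rw [hfabs x, one_mul]
    calc (2 : ℝ) ^ (-(k' : ℤ)) ≤ 1 := by
          apply zpow_le_one_of_nonpos₀ <;> norm_num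
      _ ≤ |f x - g x| := h1
end

section
/- Let P, Q be orthogonal projectors on a finite-dimensional Hilbert space, and set f(P,Q) := min over projectors P̃ of ‖PQP − P̃‖ (operator norm). Then ‖[P,Q]‖ = √(f(P,Q) − f(P,Q)²). -/
variable {E : Type*} [NormedAddCommGroup E] [InnerProductSpace ℂ E] [FiniteDimensional ℂ E]

/-- An orthogonal projector: a self-adjoint idempotent operator. -/
def IsOrthoProj (P : E →L[ℂ] E) : Prop := IsSelfAdjoint P ∧ P * P = P

open Pointwise
open scoped InnerProductSpace

section auxiliary

lemma continuousOn_of_finite' {S : Set ℝ} (hS : S.Finite) (f : ℝ → ℝ) : ContinuousOn f S := by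
  have : Finite (↥S) := hS.to_subtype
  have : DiscreteTopology (↥S) := Finite.instDiscreteTopology
  exact continuousOn_iff_continuous_restrict.mpr continuous_of_discreteTopology

lemma ortho_inner_zero' (R : E →L[ℂ] E) (hR : IsOrthoProj R) (u v : E) :
    ⟪R u, (1 - R) v⟫_ℂ = 0 := by
  have hadj : ContinuousLinearMap.adjoint R = R := (ContinuousLinearMap.star_eq_adjoint R) ▸ hR.1
  have h1 : ⟪R u, (1 - R) v⟫_ℂ = ⟪u, R ((1 - R) v)⟫_ℂ := by
    nth_rewrite 1 [← hadj]
    exact ContinuousLinearMap.adjoint_inner_left R ((1 - R) v) u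
  rw [h1]
  have : R ((1 - R) v) = (R * (1 - R)) v := rfl
  rw [this, mul_sub, mul_one, hR.2, sub_self]
  simp

lemma ortho_pythagoras' (R : E →L[ℂ] E) (hR : IsOrthoProj R) (x : E) :
    ‖R x‖ ^ 2 + ‖(1 - R) x‖ ^ 2 = ‖x‖ ^ 2 := by
  have h : R x + (1 - R) x = x := by simp
  have h2 := ortho_inner_zero' R hR x x
  have h3 := @norm_add_sq ℂ _ _ _ _ (R x) ((1 - R) x)
  rw [h, h2] at h3
  simp only [ContinuousLinearMap.sub_apply, ContinuousLinearMap.one_apply] at h3 ⊢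
  simp at h3
  linarith

lemma norm_combo_sq' (R : E →L[ℂ] E) (hR : IsOrthoProj R) (c d : ℂ) (x : E) :
    ‖c • R x + d • (1 - R) x‖ ^ 2 = ‖c‖ ^ 2 * ‖R x‖ ^ 2 + ‖d‖ ^ 2 * ‖(1 - R) x‖ ^ 2 := by
  have h2 : ⟪c • R x, d • (1 - R) x⟫_ℂ = 0 := by
    rw [inner_smul_left, inner_smul_right, ortho_inner_zero' R hR x x]; ring
  have h3 := @norm_add_sq ℂ _ _ _ _ (c • R x) (d • (1 - R) x)
  rw [h2] at h3
  simp only [map_zero, mul_zero, add_zero, norm_smul] at h3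
  rw [h3]; ring

/-- If `t` lies in the real spectrum of `Aop` with `0 ≤ t ≤ 1`, then any orthogonal
projector `R` is at distance at least `min t (1 - t)` from `Aop`. -/
lemma min_le_norm_sub' (Aop R : E →L[ℂ] E) (hR : IsOrthoProj R)
    {t : ℝ} (ht : t ∈ spectrum ℝ Aop) :
    min t (1 - t) ≤ ‖Aop - R‖ := by
  by_contra hcon
  push_neg at hcon
  set m := min t (1 - t) with hm
  have hm0 : 0 < m := lt_of_le_of_lt (norm_nonneg _) hcon
  have hmt : m ≤ t := min_le_left _ _
  have hmt' : m ≤ 1 - t := min_le_right _ _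
  have ht0 : 0 < t := lt_of_lt_of_le hm0 hmt
  have ht1 : t < 1 := by have := lt_of_lt_of_le hm0 hmt'; linarith
  set c : ℂ := (((1 - t)⁻¹ : ℝ) : ℂ) with hc
  set d : ℂ := ((-t⁻¹ : ℝ) : ℂ) with hd
  set T : E →L[ℂ] E := c • R + d • (1 - R) with hT
  have h1t : (1 - t : ℝ) ≠ 0 := by linarith
  have htne : (t : ℝ) ≠ 0 := ne_of_gt ht0
  have hRR : R * R = R := hR.2
  have hRR' : R * (1 - R) = 0 := by rw [mul_sub, mul_one, hRR, sub_self]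
  have hR'R : (1 - R) * R = 0 := by rw [sub_mul, one_mul, hRR, sub_self]
  have hR'R' : (1 - R) * (1 - R) = (1 - R) := by
    rw [sub_mul, one_mul, mul_sub, mul_one, hRR]; abel
  have hsplit : R - (t : ℂ) • 1 = (((1 - t : ℝ)) : ℂ) • R + ((-t : ℝ) : ℂ) • (1 - R) := by
    push_cast
    module
  have e1 : (R - (t : ℂ) • 1) * T = 1 := by
    rw [hsplit, hT, add_mul, mul_add, mul_add]
    simp only [smul_mul_assoc, mul_smul_comm, smul_smul, hRR, hRR', hR'R, hR'R', smul_zero,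
      add_zero, zero_add]
    have hc1 : ((1 - t : ℝ) : ℂ) * c = 1 := by
      rw [hc, ← Complex.ofReal_mul, mul_inv_cancel₀ h1t, Complex.ofReal_one]
    have hd1 : ((-t : ℝ) : ℂ) * d = 1 := by
      rw [hd, ← Complex.ofReal_mul]
      norm_num [mul_inv_cancel₀ htne]
    rw [mul_comm c, mul_comm d, hc1, hd1, one_smul, one_smul]
    abel
  have e2 : T * (R - (t : ℂ) • 1) = 1 := by
    rw [hsplit, hT, add_mul, mul_add, mul_add]
    simp only [smul_mul_assoc, mul_smul_comm, smul_smul, hRR, hRR', hR'R, hR'R', smul_zero,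
      add_zero, zero_add]
    have hc1 : ((1 - t : ℝ) : ℂ) * c = 1 := by
      rw [hc, ← Complex.ofReal_mul, mul_inv_cancel₀ h1t, Complex.ofReal_one]
    have hd1 : ((-t : ℝ) : ℂ) * d = 1 := by
      rw [hd, ← Complex.ofReal_mul]
      norm_num [mul_inv_cancel₀ htne]
    rw [hc1, hd1, one_smul, one_smul]
    abel
  have hTnorm : ‖T‖ ≤ m⁻¹ := by
    apply ContinuousLinearMap.opNorm_le_bound T (by positivity)
    intro x
    have hsq := norm_combo_sq' R hR c d x
    have hTx : T x = c • R x + d • (1 - R) x := by simp [hT]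
    have hpyth := ortho_pythagoras' R hR x
    have hcn : ‖c‖ = (1 - t)⁻¹ := by
      rw [hc, Complex.norm_real, Real.norm_eq_abs, abs_of_pos (inv_pos.mpr (by linarith))]
    have hdn : ‖d‖ = t⁻¹ := by
      rw [hd, Complex.norm_real, Real.norm_eq_abs,
        abs_of_nonpos (neg_nonpos.mpr (inv_nonneg.mpr ht0.le))]
      ring
    have hc' : (1 - t)⁻¹ ≤ m⁻¹ := by
      apply inv_anti₀ hm0 hmt'
    have hd' : t⁻¹ ≤ m⁻¹ := by
      apply inv_anti₀ hm0 hmt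
    have key : ‖T x‖ ^ 2 ≤ (m⁻¹ * ‖x‖) ^ 2 := by
      rw [hTx, hsq, hcn, hdn]
      have h1' : 0 ≤ (1 - t)⁻¹ := inv_nonneg.mpr (by linarith)
      have h2' : 0 ≤ t⁻¹ := inv_nonneg.mpr ht0.le
      have p1 : (1 - t)⁻¹ ^ 2 ≤ m⁻¹ ^ 2 := pow_le_pow_left₀ h1' hc' 2
      have p2 : t⁻¹ ^ 2 ≤ m⁻¹ ^ 2 := pow_le_pow_left₀ h2' hd' 2
      nlinarith [sq_nonneg (‖R x‖), sq_nonneg (‖(1 - R) x‖)]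
    nlinarith [norm_nonneg (T x), mul_nonneg (inv_nonneg.mpr hm0.le) (norm_nonneg x)]
  have hu1 : IsUnit (R - (t : ℂ) • 1) := ⟨⟨R - (t : ℂ) • 1, T, e1, e2⟩, rfl⟩
  have hlt1 : ‖T * (Aop - R)‖ < 1 := by
    calc ‖T * (Aop - R)‖ ≤ ‖T‖ * ‖Aop - R‖ := norm_mul_le _ _
      _ ≤ m⁻¹ * ‖Aop - R‖ := by
          apply mul_le_mul_of_nonneg_right hTnorm (norm_nonneg _)
      _ < m⁻¹ * m := by
          apply mul_lt_mul_of_pos_left hcon (by positivity)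
      _ = 1 := inv_mul_cancel₀ (ne_of_gt hm0)
  have hu2 : IsUnit (1 + T * (Aop - R)) := by
    simpa [Units.oneSub, sub_neg_eq_add] using
      (Units.oneSub (-(T * (Aop - R))) (by rwa [norm_neg])).isUnit
  have heq : Aop - (t : ℂ) • 1 = (R - (t : ℂ) • 1) * (1 + T * (Aop - R)) := by
    rw [mul_add, mul_one, ← mul_assoc, e1, one_mul]
    abel
  have hu : IsUnit (Aop - (t : ℂ) • 1) := heq ▸ hu1.mul hu2
  apply spectrum.mem_iff.mp ht
  have halg : algebraMap ℝ (E →L[ℂ] E) t = (t : ℂ) • 1 := by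
    rw [IsScalarTower.algebraMap_apply ℝ ℂ (E →L[ℂ] E), Algebra.algebraMap_eq_smul_one]
    norm_num
  rw [halg]
  have := hu.neg
  rwa [neg_sub] at this

lemma spec_finite' (a : E →L[ℂ] E) : (spectrum ℝ a).Finite := by
  rw [← spectrum.preimage_algebraMap ℂ]
  apply Set.Finite.preimage ((algebraMap ℝ ℂ).injective.injOn)
  have e := Module.End.toContinuousLinearMap E (𝕜 := ℂ)
  have : a = e (e.symm a) := (e.apply_symm_apply a).symm
  rw [this, AlgEquiv.spectrum_eq]
  exact Module.End.finite_spectrum _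

lemma spec_mem_Icc' (P Q : E →L[ℂ] E) (hP : IsOrthoProj P) (hQ : IsOrthoProj Q)
    {t : ℝ} (ht : t ∈ spectrum ℝ (P * Q * P)) : t ∈ Set.Icc (0:ℝ) 1 := by
  have hsP := hP.1.star_eq
  have hsQ := hQ.1.star_eq
  have hpos : (0 : E →L[ℂ] E) ≤ P * Q * P := by
    have := star_mul_self_nonneg (Q * P)
    have hst : star (Q * P) = P * Q := by rw [star_mul, hsP, hsQ]
    rw [hst] at this
    calc (0 : E →L[ℂ] E) ≤ P * Q * (Q * P) := this
      _ = P * Q * P := by rw [show P * Q * (Q * P) = P * (Q * Q) * P by noncomm_ring, hQ.2]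
  have hpos1 : (0 : E →L[ℂ] E) ≤ 1 - P * Q * P := by
    have h1 := star_mul_self_nonneg ((1 - Q) * P)
    have h2 := star_mul_self_nonneg (1 - P)
    have hst1 : star ((1 - Q) * P) = P * (1 - Q) := by
      rw [star_mul, hsP, star_sub, star_one, hsQ]
    have hst2 : star (1 - P) = 1 - P := by rw [star_sub, star_one, hsP]
    rw [hst1] at h1
    rw [hst2] at h2
    have key : P * (1 - Q) * ((1 - Q) * P) + (1 - P) * (1 - P) = 1 - P * Q * P := by
      have hQ' : (1 - Q) * (1 - Q) = 1 - Q := by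
        rw [sub_mul, one_mul, mul_sub, mul_one, hQ.2]; abel
      have : P * (1 - Q) * ((1 - Q) * P) = P * ((1 - Q) * (1 - Q)) * P := by noncomm_ring
      rw [this, hQ']
      have hP' : (1 - P) * (1 - P) = 1 - P := by
        rw [sub_mul, one_mul, mul_sub, mul_one, hP.2]; abel
      rw [hP']
      rw [mul_sub, mul_one, sub_mul, hP.2]
      abel
    rw [← key]
    exact add_nonneg h1 h2
  constructor
  · exact spectrum_nonneg_of_nonneg hpos ht
  · have h1t : 1 - t ∈ spectrum ℝ (1 - P * Q * P) := by
      have heq := spectrum.singleton_sub_eq (P * Q * P) (1 : ℝ)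
      have hmem : 1 - t ∈ {(1:ℝ)} - spectrum ℝ (P * Q * P) :=
        Set.sub_mem_sub rfl ht
      rw [heq] at hmem
      simpa using hmem
    have := spectrum_nonneg_of_nonneg hpos1 h1t
    linarith

lemma comm_norm_sq' (P Q : E →L[ℂ] E) (hP : IsOrthoProj P) (hQ : IsOrthoProj Q) :
    ‖P * Q - Q * P‖ ^ 2 = ‖P * Q * P - (P * Q * P) * (P * Q * P)‖ := by
  have hPP : ∀ z : E →L[ℂ] E, P * (P * z) = P * z := fun z => by rw [← mul_assoc, hP.2]
  have hQQ : ∀ z : E →L[ℂ] E, Q * (Q * z) = Q * z := fun z => by rw [← mul_assoc, hQ.2]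
  set X := P * Q - P * Q * P with hX
  have hsX : star X = Q * P - P * Q * P := by
    rw [hX, star_sub, star_mul, star_mul, star_mul, hP.1.star_eq, hQ.1.star_eq, ← mul_assoc]
  have hC : P * Q - Q * P = X - star X := by rw [hsX, hX]; abel
  have hXX : X * X = 0 := by
    simp only [hX, mul_sub, sub_mul, mul_assoc, hPP, hQQ, hP.2, hQ.2]
    abel
  have hXsX : X * star X = P * Q * P - (P * Q * P) * (P * Q * P) := by
    rw [hsX, hX]
    simp only [mul_sub, sub_mul, mul_assoc, hPP, hQQ, hP.2, hQ.2]
    abel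
  have hXP : X * (1 - P) = X := by
    rw [hX]
    simp only [mul_sub, sub_mul, mul_one, mul_assoc, hPP, hQQ, hP.2, hQ.2]
    abel
  have hsXP : star X * P = star X := by
    rw [hsX]
    simp only [mul_sub, sub_mul, mul_assoc, hPP, hQQ, hP.2, hQ.2]
  have hinner : ∀ x : E, ⟪X x, (star X) x⟫_ℂ = 0 := by
    intro x
    rw [ContinuousLinearMap.star_eq_adjoint, ContinuousLinearMap.adjoint_inner_right]
    have : X (X x) = (X * X) x := rfl
    rw [this, hXX]
    simp
  have hnormx : ∀ x : E, ‖(X - star X) x‖ ^ 2 = ‖X x‖ ^ 2 + ‖(star X) x‖ ^ 2 := by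
    intro x
    have h := @norm_sub_sq ℂ _ _ _ _ (X x) ((star X) x)
    rw [hinner x] at h
    simp only [ContinuousLinearMap.sub_apply] at h ⊢
    simp at h
    linarith
  have hble : ‖X‖ ≤ ‖X - star X‖ := by
    apply ContinuousLinearMap.opNorm_le_bound _ (norm_nonneg _)
    intro x
    have h1 := hnormx x
    have h2 : ‖(X - star X) x‖ ≤ ‖X - star X‖ * ‖x‖ := (X - star X).le_opNorm x
    have h3 : ‖X x‖ ^ 2 ≤ ‖(X - star X) x‖ ^ 2 := by nlinarith [sq_nonneg (‖(star X) x‖)]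
    nlinarith [norm_nonneg (X x), norm_nonneg ((X - star X) x)]
  have hbge : ‖X - star X‖ ≤ ‖X‖ := by
    apply ContinuousLinearMap.opNorm_le_bound _ (norm_nonneg _)
    intro x
    have h1 := hnormx x
    have e1 : X x = X ((1 - P) x) := by
      conv_lhs => rw [← hXP]
      rfl
    have e2 : (star X) x = (star X) (P x) := by
      conv_lhs => rw [← hsXP]
      rfl
    have b1 : ‖X x‖ ≤ ‖X‖ * ‖(1 - P) x‖ := by rw [e1]; exact X.le_opNorm _
    have b2 : ‖(star X) x‖ ≤ ‖X‖ * ‖P x‖ := by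
      rw [e2]
      calc ‖(star X) (P x)‖ ≤ ‖star X‖ * ‖P x‖ := (star X).le_opNorm _
        _ = ‖X‖ * ‖P x‖ := by rw [norm_star X]
    have hpyth := ortho_pythagoras' P hP x
    have hsq : ‖(X - star X) x‖ ^ 2 ≤ (‖X‖ * ‖x‖) ^ 2 := by
      rw [h1]
      have b1' : ‖X x‖ ^ 2 ≤ (‖X‖ * ‖(1 - P) x‖) ^ 2 :=
        pow_le_pow_left₀ (norm_nonneg _) b1 2
      have b2' : ‖(star X) x‖ ^ 2 ≤ (‖X‖ * ‖P x‖) ^ 2 :=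
        pow_le_pow_left₀ (norm_nonneg _) b2 2
      nlinarith [sq_nonneg ‖X‖]
    nlinarith [norm_nonneg ((X - star X) x), mul_nonneg (norm_nonneg X) (norm_nonneg x)]
  have hCX : ‖P * Q - Q * P‖ = ‖X‖ := by rw [hC]; exact le_antisymm hbge hble
  have hcs : ‖X * star X‖ = ‖X‖ * ‖X‖ := CStarRing.norm_self_mul_star
  rw [hCX, ← hXsX, hcs]
  ring

end auxiliary

/-- For orthogonal projectors `P, Q` on a finite-dimensional Hilbert space, with
`f(P,Q) := min_{P̃ projector} ‖PQP − P̃‖`, one has `‖[P,Q]‖ = √(f(P,Q) − f(P,Q)²)`. -/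
theorem stmt3 (P Q : E →L[ℂ] E) (hP : IsOrthoProj P) (hQ : IsOrthoProj Q) :
    ‖P * Q - Q * P‖ =
      Real.sqrt (sInf {r : ℝ | ∃ R : E →L[ℂ] E, IsOrthoProj R ∧ r = ‖P * Q * P - R‖} -
        (sInf {r : ℝ | ∃ R : E →L[ℂ] E, IsOrthoProj R ∧ r = ‖P * Q * P - R‖}) ^ 2) := by
  set F : Set ℝ := {r : ℝ | ∃ R : E →L[ℂ] E, IsOrthoProj R ∧ r = ‖P * Q * P - R‖} with hF
  set A : E →L[ℂ] E := P * Q * P with hA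
  have hA_sa : IsSelfAdjoint A := by
    rw [hA, IsSelfAdjoint, star_mul, star_mul, hP.1.star_eq, hQ.1.star_eq, mul_assoc]
  have hOP0 : IsOrthoProj (0 : E →L[ℂ] E) := ⟨by simp [IsSelfAdjoint], by simp⟩
  have hFne : F.Nonempty := ⟨‖A - 0‖, 0, hOP0, rfl⟩
  have hFbdd : BddBelow F := ⟨0, by rintro r ⟨R, hR, rfl⟩; exact norm_nonneg _⟩
  rcases subsingleton_or_nontrivial E with hE | hE
  · have hsub : Subsingleton (E →L[ℂ] E) :=
      ⟨fun f g => ContinuousLinearMap.ext fun x => Subsingleton.elim _ _⟩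
    have hz : ∀ T : E →L[ℂ] E, ‖T‖ = 0 := fun T => by
      rw [Subsingleton.elim T 0, norm_zero]
    have hFeq : F = {0} := by
      apply Set.eq_singleton_iff_nonempty_unique_mem.mpr
      refine ⟨hFne, ?_⟩
      rintro r ⟨R, hR, rfl⟩
      exact hz _
    rw [hFeq, csInf_singleton, hz]
    norm_num
  · have hnt : Nontrivial (E →L[ℂ] E) := by
      obtain ⟨x, hx⟩ := exists_ne (0 : E)
      exact ⟨1, 0, fun h => hx (by simpa using DFunLike.congr_fun h x)⟩
    set S : Set ℝ := spectrum ℝ A with hS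
    have hSfin : S.Finite := spec_finite' A
    have hSne : S.Nonempty := ContinuousFunctionalCalculus.spectrum_nonempty A hA_sa
    have hIcc : ∀ t ∈ S, t ∈ Set.Icc (0:ℝ) 1 := fun t ht => spec_mem_Icc' P Q hP hQ ht
    set g : ℝ → ℝ := fun s => min s (1 - s) with hg
    have hgSfin : (g '' S).Finite := hSfin.image g
    have hgSne : (g '' S).Nonempty := hSne.image g
    set μ : ℝ := sSup (g '' S) with hμ
    obtain ⟨t₀, ht₀S, ht₀⟩ := Set.Nonempty.csSup_mem hgSne hgSfin
    have ht₀Icc := hIcc t₀ ht₀S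
    have hμ0 : 0 ≤ μ := by
      rw [hμ, ← ht₀, hg]
      simp only
      rcases ht₀Icc with ⟨h1, h2⟩
      exact le_min h1 (by linarith)
    have hμhalf : μ ≤ 1 / 2 := by
      rw [hμ, ← ht₀, hg]
      simp only
      rcases le_total t₀ (1 - t₀) with h | h
      · calc min t₀ (1 - t₀) ≤ t₀ := min_le_left _ _
          _ ≤ 1 / 2 := by linarith
      · calc min t₀ (1 - t₀) ≤ 1 - t₀ := min_le_right _ _
          _ ≤ 1 / 2 := by linarith
    -- lower bound : every element of F is at least μ
    have h_lb : ∀ r ∈ F, μ ≤ r := by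
      rintro r ⟨R, hR, rfl⟩
      rw [hμ, ← ht₀]
      exact min_le_norm_sub' A R hR ht₀S
    -- upper bound : the spectral projector realizes distance ≤ μ
    set h : ℝ → ℝ := fun s => if s < 1/2 then 0 else 1 with hh
    have hcont : ∀ f : ℝ → ℝ, ContinuousOn f (spectrum ℝ A) := fun f =>
      continuousOn_of_finite' hSfin f
    set R₀ : E →L[ℂ] E := cfc h A with hR₀def
    have hR₀ : IsOrthoProj R₀ := by
      constructor
      · exact cfc_predicate h A
      · rw [hR₀def, ← cfc_mul h h A (hcont h) (hcont h)]
        apply cfc_congr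
        intro x _
        simp only [hh]
        split_ifs <;> norm_num
    have hAR₀ : A - R₀ = cfc (fun s => s - h s) A := by
      rw [cfc_sub (fun s => s) (fun s => h s) A (hcont _) (hcont _), cfc_id' ℝ A hA_sa, hR₀def]
    have hle_sup : ∀ x ∈ S, g x ≤ μ := fun x hx =>
      le_csSup hgSfin.bddAbove (Set.mem_image_of_mem g hx)
    have hnormAR₀ : ‖A - R₀‖ ≤ μ := by
      rw [hAR₀]
      apply norm_cfc_le hμ0
      intro x hx
      rcases hIcc x hx with ⟨hx0, hx1⟩
      have hgx := hle_sup x hx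
      rw [hg] at hgx
      simp only at hgx
      rw [Real.norm_eq_abs]
      by_cases hxh : x < 1/2
      · simp only [hh, if_pos hxh]
        rw [sub_zero, abs_of_nonneg hx0]
        calc x = min x (1 - x) := (min_eq_left (by linarith)).symm
          _ ≤ μ := hgx
      · simp only [hh, if_neg hxh]
        push_neg at hxh
        rw [abs_of_nonpos (by linarith)]
        calc -(x - 1) = 1 - x := by ring
          _ = min x (1 - x) := (min_eq_right (by linarith)).symm
          _ ≤ μ := hgx
    have hInfF : sInf F = μ := by
      apply le_antisymm
      · exact (csInf_le hFbdd ⟨R₀, hR₀, rfl⟩).trans hnormAR₀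
      · exact le_csInf hFne h_lb
    -- the norm of A - A², via functional calculus
    have hAA : cfc (fun s : ℝ => s - s * s) A = A - A * A := by
      rw [cfc_sub (fun s => s) (fun s => s * s) A (hcont _) (hcont _),
        cfc_mul (fun s => s) (fun s => s) A (hcont _) (hcont _), cfc_id' ℝ A hA_sa]
    have hnormAA : ‖A - A * A‖ = μ - μ ^ 2 := by
      rw [← hAA]
      apply le_antisymm
      · apply norm_cfc_le (by nlinarith)
        intro x hx
        rcases hIcc x hx with ⟨hx0, hx1⟩
        have hgx := hle_sup x hx
        rw [hg] at hgx
        simp only at hgx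
        rw [Real.norm_eq_abs, abs_of_nonneg (by nlinarith)]
        rcases le_total x (1 - x) with hcase | hcase
        · have hxμ : x ≤ μ := le_trans (le_of_eq (min_eq_left hcase).symm) hgx
          nlinarith [mul_nonneg (sub_nonneg.mpr hxμ) (by linarith : (0:ℝ) ≤ 1 - μ - x)]
        · have hxμ : 1 - x ≤ μ := le_trans (le_of_eq (min_eq_right hcase).symm) hgx
          nlinarith [mul_nonneg (sub_nonneg.mpr hxμ) (by linarith : (0:ℝ) ≤ x - μ)]
      · have hb := norm_apply_le_norm_cfc (fun s : ℝ => s - s * s) A ht₀S (hcont _) hA_sa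
        have hμt : μ = min t₀ (1 - t₀) := by rw [hμ, ← ht₀]
        have : ‖t₀ - t₀ * t₀‖ = μ - μ ^ 2 := by
          rw [Real.norm_eq_abs, abs_of_nonneg (by nlinarith [ht₀Icc.1, ht₀Icc.2])]
          rcases le_total t₀ (1 - t₀) with hcase | hcase
          · rw [hμt, min_eq_left hcase]; ring
          · rw [hμt, min_eq_right hcase]; ring
        rw [← this]
        exact hb
    have hsq : ‖P * Q - Q * P‖ ^ 2 = sInf F - (sInf F) ^ 2 := by
      rw [hInfF, ← hnormAA]
      exact comm_norm_sq' P Q hP hQ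
    rw [← hsq, Real.sqrt_sq (norm_nonneg _)]
end

section
/- For any linear operators A, B on a finite-dimensional space and t ∈ ℝ, e^{tA} e^{tB} − e^{t(A+B)} = ∫₀ᵗ e^{(t−τ)(A+B)} e^{τA} (B − e^{−τA} B e^{τA}) e^{τB} dτ. -/
set_option maxHeartbeats 1000000

open NormedSpace

lemma stmt9_key {R : Type*} [Ring R] (u vA vB nA a b : R) (h : vA * nA = 1) :
    (-(u * (a + b))) * (vA * vB) + u * ((a * vA) * vB + vA * (b * vB))
      = u * vA * (b - nA * b * vA) * vB := by
  have h2 : vA * (nA * (b * (vA * vB))) = b * (vA * vB) := by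
    rw [← mul_assoc, h, one_mul]
  simp only [mul_sub, sub_mul, mul_add, add_mul, neg_mul, mul_assoc, h2]
  abel

/-- Explicit Trotter error: for operators `A, B` on a finite-dimensional space and `t ∈ ℝ`,
`e^{tA} e^{tB} − e^{t(A+B)} = ∫₀ᵗ e^{(t−τ)(A+B)} e^{τA} (B − e^{−τA} B e^{τA}) e^{τB} dτ`. -/
theorem stmt9 {E : Type*} [NormedAddCommGroup E] [NormedSpace ℂ E] [FiniteDimensional ℂ E]
    (A B : E →L[ℂ] E) (t : ℝ) :
    NormedSpace.exp (t • A) * NormedSpace.exp (t • B) - NormedSpace.exp (t • (A + B)) =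
      ∫ τ in (0 : ℝ)..t,
        NormedSpace.exp ((t - τ) • (A + B)) * NormedSpace.exp (τ • A) *
          (B - NormedSpace.exp (-(τ • A)) * B * NormedSpace.exp (τ • A)) *
          NormedSpace.exp (τ • B) := by
  let +nondep : NormedAlgebra ℚ (E →L[ℂ] E) := .restrictScalars ℚ ℂ _
  have hc : ∀ X : E →L[ℂ] E, Continuous fun τ : ℝ => exp (τ • X) := fun X =>
    exp_continuous.comp (continuous_id.smul continuous_const)
  have hc' : Continuous fun τ : ℝ => exp ((t - τ) • (A + B)) :=
    exp_continuous.comp ((continuous_const.sub continuous_id).smul continuous_const)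
  have hcn : Continuous fun τ : ℝ => exp (-(τ • A)) :=
    exp_continuous.comp ((continuous_id.smul continuous_const).neg)
  set F : ℝ → (E →L[ℂ] E) :=
    fun τ => exp ((t - τ) • (A + B)) * (exp (τ • A) * exp (τ • B)) with hF
  set g : ℝ → (E →L[ℂ] E) := fun τ =>
      exp ((t - τ) • (A + B)) * exp (τ • A) *
        (B - exp (-(τ • A)) * B * exp (τ • A)) * exp (τ • B) with hg
  have hderiv : ∀ τ : ℝ, HasDerivAt F (g τ) τ := by
    intro τ
    have hu : HasDerivAt (fun τ : ℝ => exp ((t - τ) • (A + B)))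
        ((-1 : ℝ) • (exp ((t - τ) • (A + B)) * (A + B))) τ := by
      have h1 : HasDerivAt (fun τ : ℝ => t - τ) (-1) τ := (hasDerivAt_id τ).const_sub t
      exact (hasDerivAt_exp_smul_const (A + B) (t - τ)).scomp τ h1
    have hvA : HasDerivAt (fun τ : ℝ => exp (τ • A)) (A * exp (τ • A)) τ :=
      hasDerivAt_exp_smul_const' A τ
    have hvB : HasDerivAt (fun τ : ℝ => exp (τ • B)) (B * exp (τ • B)) τ :=
      hasDerivAt_exp_smul_const' B τ
    have hmul := hu.mul (hvA.mul hvB)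
    have hinv : exp (τ • A) * exp (-(τ • A)) = 1 := by
      rw [← exp_add_of_commute ((Commute.refl (τ • A)).neg_right), add_neg_cancel, exp_zero]
    have hkey := stmt9_key (exp ((t - τ) • (A + B))) (exp (τ • A)) (exp (τ • B))
      (exp (-(τ • A))) A B hinv
    refine hmul.congr_deriv ?_
    rw [hg]
    simp only [neg_one_smul]
    exact hkey
  have hint : IntervalIntegrable g MeasureTheory.volume 0 t := by
    apply Continuous.intervalIntegrable
    exact ((hc'.mul (hc A)).mul (continuous_const.sub ((hcn.mul continuous_const).mul (hc A)))).mul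
      (hc B)
  have hFTC := intervalIntegral.integral_eq_sub_of_hasDerivAt
    (f := F) (f' := g) (fun τ _ => hderiv τ) hint
  rw [hFTC, hF]
  simp [sub_self, exp_zero]
end

section
/- Let S be an anti-Hermitian operator and H any operator on a finite-dimensional Hilbert space. For k ≥ 0, define r_k(H) = ‖e^S H e^{−S} − Σ_{p=0}^{k−1} (1/p!) ad_S^p(H)‖ (with the sum empty for k = 0). Then r_k(H) ≤ (1/k!) ‖ad_S^k(H)‖, where ad_S(X) = [S, X]. -/
open NormedSpace Set

set_option synthInstance.maxHeartbeats 1000000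
set_option maxHeartbeats 1000000

section aux
variable {V : Type*} [NormedAddCommGroup V] [NormedSpace ℝ V]

lemma auxA (u : ℕ → ℝ → V) (hu : ∀ p t, HasDerivAt (u p) (u (p+1) t) t)
    (m : ℕ) : ∀ p : ℕ, ContDiff ℝ m (u p) := by
  induction m with
  | zero =>
    intro p
    rw [show ((0:ℕ) : WithTop ℕ∞) = 0 from rfl, contDiff_zero]
    exact Differentiable.continuous (fun t => (hu p t).differentiableAt)
  | succ m ih =>
    intro p
    have hd : deriv (u p) = u (p+1) := funext fun t => (hu p t).deriv
    rw [show ((m+1:ℕ) : WithTop ℕ∞) = (m : WithTop ℕ∞) + 1 by norm_cast]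
    refine contDiff_succ_iff_deriv.mpr ⟨fun t => (hu p t).differentiableAt, by simp, ?_⟩
    rw [hd]; exact ih (p+1)

lemma auxB (u : ℕ → ℝ → V) (hu : ∀ p t, HasDerivAt (u p) (u (p+1) t) t)
    (p : ℕ) : ∀ t ∈ Icc (0:ℝ) 1, iteratedDerivWithin p (u 0) (Icc 0 1) t = u p t := by
  induction p with
  | zero => intro t _; simp [iteratedDerivWithin_zero]
  | succ p ih =>
    intro t ht
    rw [iteratedDerivWithin_succ,
      derivWithin_congr ih (ih t ht),
      (hu p t).hasDerivWithinAt.derivWithin ((uniqueDiffOn_Icc zero_lt_one) t ht)]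

end aux

section main
variable {E : Type*} [NormedAddCommGroup E] [InnerProductSpace ℂ E]
    [FiniteDimensional ℂ E]

lemma exp_unitary (S : E →L[ℂ] E) (hS : S.adjoint = -S) (t : ℝ) :
    exp (t • S) ∈ unitary (E →L[ℂ] E) := by
  let +nondep : NormedAlgebra ℚ (E →L[ℂ] E) := .restrictScalars ℚ ℂ _
  apply exp_mem_unitary_of_mem_skewAdjoint
  rw [skewAdjoint.mem_iff]
  have h : star S = -S := hS
  rw [show star (t • S) = t • star S from star_smul t S, h]
  simp

lemma g_norm (S : E →L[ℂ] E) (hS : S.adjoint = -S) (X : E →L[ℂ] E) (t : ℝ) :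
    ‖exp (t • S) * X * exp (t • (-S))‖ = ‖X‖ := by
  have h2 : exp (t • (-S)) ∈ unitary (E →L[ℂ] E) := by
    apply exp_unitary (-S)
    rw [map_neg, hS, neg_neg]
  rw [CStarRing.norm_mul_mem_unitary _ h2, CStarRing.norm_mem_unitary_mul _ (exp_unitary S hS t)]

lemma hasDerivAt_g (S : E →L[ℂ] E) (X : E →L[ℂ] E) (t : ℝ) :
    HasDerivAt (fun u : ℝ => exp (u • S) * X * exp (u • (-S)))
      (exp (t • S) * (S * X - X * S) * exp (t • (-S))) t := by
  have h1 : HasDerivAt (fun u : ℝ => exp (u • S)) (exp (t • S) * S) t :=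
    hasDerivAt_exp_smul_const S t
  have h2 : HasDerivAt (fun u : ℝ => exp (u • (-S))) ((-S) * exp (t • (-S))) t :=
    hasDerivAt_exp_smul_const' (-S) t
  have h4 := (h1.mul_const X).mul h2
  exact h4.congr_deriv (by noncomm_ring)

end main

/-- For `S` anti-Hermitian and any operator `H` on a finite-dimensional Hilbert space, the
truncation error of the adjoint-series expansion of `e^S H e^{−S}` satisfies
`‖e^S H e^{−S} − Σ_{p<k} (1/p!) ad_S^p(H)‖ ≤ (1/k!) ‖ad_S^k(H)‖`. -/
theorem stmt10 {E : Type*} [NormedAddCommGroup E] [InnerProductSpace ℂ E]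
    [FiniteDimensional ℂ E] (S H : E →L[ℂ] E) (hS : S.adjoint = -S) (k : ℕ) :
    ‖NormedSpace.exp S * H * NormedSpace.exp (-S) -
        ∑ p ∈ Finset.range k, ((p.factorial : ℝ)⁻¹) • (fun X => S * X - X * S)^[p] H‖ ≤
      (k.factorial : ℝ)⁻¹ * ‖(fun X => S * X - X * S)^[k] H‖ := by
  classical
  set ad : (E →L[ℂ] E) → (E →L[ℂ] E) := fun X => S * X - X * S with had
  set u : ℕ → ℝ → (E →L[ℂ] E) := fun p t => exp (t • S) * ad^[p] H * exp (t • (-S)) with hu_def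
  have hu : ∀ p t, HasDerivAt (u p) (u (p+1) t) t := by
    intro p t
    have h := hasDerivAt_g S (ad^[p] H) t
    simp only [hu_def, Function.iterate_succ_apply', had]
    exact h
  -- rewrite the complex exponentials as real ones
  have hexp : (exp : (E →L[ℂ] E) → _) = exp := rfl
  have hu1 : exp S * H * exp (-S) = u 0 1 := by
    simp [hu_def, hexp, Function.iterate_zero]
  have hu0 : ∀ p, u p 0 = ad^[p] H := by
    intro p; simp [hu_def, exp_zero]
  have hnorm : ∀ p t, ‖u p t‖ = ‖ad^[p] H‖ := fun p t => g_norm S hS _ t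
  rw [hu1]
  rcases Nat.eq_zero_or_pos k with hk | hk
  · subst hk
    simp only [Finset.range_zero, Finset.sum_empty, sub_zero, Nat.factorial_zero,
      Nat.cast_one, inv_one, one_mul, Function.iterate_zero, id_eq]
    have := hnorm 0 1
    simp only [Function.iterate_zero, id_eq] at this
    rw [this]
  obtain ⟨n, rfl⟩ : ∃ n, k = n + 1 := ⟨k - 1, (Nat.succ_pred_eq_of_pos hk).symm⟩
  set R : E →L[ℂ] E := u 0 1 - ∑ p ∈ Finset.range (n+1), ((p.factorial : ℝ)⁻¹) • ad^[p] H with hR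
  show ‖R‖ ≤ _
  rcases eq_or_ne R 0 with h0 | h0
  · rw [h0, norm_zero]
    positivity
  obtain ⟨φ, hφ1, hφR⟩ := exists_dual_vector ℝ (R) (norm_ne_zero_iff.mpr h0)
  -- scalar-valued auxiliary family
  set v : ℕ → ℝ → ℝ := fun p t => φ (u p t) with hv_def
  have hv : ∀ p t, HasDerivAt (v p) (v (p+1) t) t := by
    intro p t
    simpa using (hasDerivAt_const t φ).clm_apply (hu p t)
  have hmem : (1:ℝ) ∈ Icc (0:ℝ) 1 := by norm_num
  have h0mem : (0:ℝ) ∈ Icc (0:ℝ) 1 := by norm_num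
  -- Taylor-Lagrange for v 0 on [0,1]
  have hcd : ContDiffOn ℝ n (v 0) (Icc 0 1) := (auxA v hv n 0).contDiffOn
  have hdiff : DifferentiableOn ℝ (iteratedDerivWithin n (v 0) (Icc 0 1)) (Ioo 0 1) := by
    intro t ht
    exact (hv n t).differentiableAt.differentiableWithinAt.congr
      (fun y hy => auxB v hv n y (Ioo_subset_Icc_self hy))
      (auxB v hv n t (Ioo_subset_Icc_self ht))
  obtain ⟨x', hx', hlag⟩ : ∃ x' ∈ Ioo (0:ℝ) 1, v 0 1 - taylorWithinEval (v 0) n (Icc 0 1) 0 1 =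
      iteratedDerivWithin (n + 1) (v 0) (Icc 0 1) x' * (1 - 0) ^ (n + 1) / ((n + 1).factorial : ℝ) := by
    have h := taylor_mean_remainder_lagrange (n := n) (x₀ := 0) (x := 1) zero_ne_one
      (by rwa [uIcc_of_le zero_le_one]) (by rwa [uIcc_of_le zero_le_one, uIoo_of_le zero_le_one])
    rwa [uIcc_of_le zero_le_one, uIoo_of_le zero_le_one] at h
  -- identify the Taylor polynomial
  have htay : taylorWithinEval (v 0) n (Icc 0 1) 0 1 =
      φ (∑ p ∈ Finset.range (n+1), ((p.factorial : ℝ)⁻¹) • ad^[p] H) := by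
    rw [taylor_within_apply, map_sum]
    refine Finset.sum_congr rfl fun p hp => ?_
    rw [auxB v hv p 0 h0mem, hv_def]
    simp [hu0 p, map_smul]
  have hval : v 0 1 - taylorWithinEval (v 0) n (Icc 0 1) 0 1 = ‖R‖ := by
    rw [htay, hv_def]
    simp only
    rw [← map_sub, ← hR]
    exact hφR
  have hid : iteratedDerivWithin (n+1) (v 0) (Icc 0 1) x' = φ (u (n+1) x') :=
    auxB v hv (n+1) x' (Ioo_subset_Icc_self hx')
  rw [hval, hid] at hlag
  have hbound : ‖R‖ ≤ ‖u (n+1) x'‖ / ((n+1).factorial : ℝ) := by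
    rw [hlag]
    have habs : |φ (u (n+1) x')| ≤ ‖u (n+1) x'‖ := by
      calc |φ (u (n+1) x')| ≤ ‖φ‖ * ‖u (n+1) x'‖ := φ.le_opNorm _
      _ = ‖u (n+1) x'‖ := by rw [hφ1, one_mul]
    calc φ (u (n+1) x') * (1 - 0) ^ (n+1) / ((n+1).factorial : ℝ)
        ≤ |φ (u (n+1) x')| / ((n+1).factorial : ℝ) := by
          rw [sub_zero, one_pow, mul_one]
          gcongr
          exact le_abs_self _
      _ ≤ ‖u (n+1) x'‖ / ((n+1).factorial : ℝ) := by gcongr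
  rw [hnorm (n+1) x'] at hbound
  calc ‖R‖ ≤ ‖ad^[n+1] H‖ / ((n+1).factorial : ℝ) := hbound
    _ = (((n+1).factorial : ℕ) : ℝ)⁻¹ * ‖ad^[n+1] H‖ := by rw [div_eq_inv_mul]
end

section
/- With E_obs(M) = V(M ⊗ P)V† and E_state(ρ) = V(ρ ⊗ τ)V† as above (V isometry, P projector with Pτ = τP = τ), for every Hermitian H on H, every density matrix ρ, and all t ∈ ℝ: e^{−i E_obs(H) t} E_state(ρ) e^{i E_obs(H) t} = E_state(e^{−iHt} ρ e^{iHt}). -/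
open scoped Kronecker ComplexOrder
open NormedSpace

private lemma exp_mul_lin {n m : ℕ} (Φ : Matrix (Fin n) (Fin n) ℂ →ₗ[ℂ] Matrix (Fin m) (Fin m) ℂ)
    (A : Matrix (Fin m) (Fin m) ℂ) (B M : Matrix (Fin n) (Fin n) ℂ)
    (h : ∀ k : ℕ, A ^ k * Φ M = Φ (B ^ k * M)) :
    exp A * Φ M = Φ (exp B * M) := by
  letI : SeminormedRing (Matrix (Fin m) (Fin m) ℂ) := Matrix.linftyOpSemiNormedRing
  letI : NormedRing (Matrix (Fin m) (Fin m) ℂ) := Matrix.linftyOpNormedRing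
  letI : NormedAlgebra ℂ (Matrix (Fin m) (Fin m) ℂ) := Matrix.linftyOpNormedAlgebra
  letI : SeminormedRing (Matrix (Fin n) (Fin n) ℂ) := Matrix.linftyOpSemiNormedRing
  letI : NormedRing (Matrix (Fin n) (Fin n) ℂ) := Matrix.linftyOpNormedRing
  letI : NormedAlgebra ℂ (Matrix (Fin n) (Fin n) ℂ) := Matrix.linftyOpNormedAlgebra
  have hΦc : Continuous Φ := Φ.continuous_of_finiteDimensional
  have hsum : Summable fun k : ℕ => ((k.factorial : ℂ)⁻¹ • B ^ k) * M :=
    (NormedSpace.expSeries_summable' (𝕂 := ℂ) B).mul_right M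
  simp only [exp_eq_tsum (𝕂 := ℂ)]
  erw [
    ← Summable.tsum_mul_right _ (NormedSpace.expSeries_summable' (𝕂 := ℂ) A),
    ← Summable.tsum_mul_right _ (NormedSpace.expSeries_summable' (𝕂 := ℂ) B)]
  erw [hsum.hasSum.map Φ hΦc |>.tsum_eq.symm]
  refine tsum_congr fun k => ?_
  simp only [Function.comp_apply, smul_mul_assoc, h k, map_smul]

private lemma mul_exp_lin {n m : ℕ} (Φ : Matrix (Fin n) (Fin n) ℂ →ₗ[ℂ] Matrix (Fin m) (Fin m) ℂ)
    (A : Matrix (Fin m) (Fin m) ℂ) (B M : Matrix (Fin n) (Fin n) ℂ)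
    (h : ∀ k : ℕ, Φ M * A ^ k = Φ (M * B ^ k)) :
    Φ M * exp A = Φ (M * exp B) := by
  letI : SeminormedRing (Matrix (Fin m) (Fin m) ℂ) := Matrix.linftyOpSemiNormedRing
  letI : NormedRing (Matrix (Fin m) (Fin m) ℂ) := Matrix.linftyOpNormedRing
  letI : NormedAlgebra ℂ (Matrix (Fin m) (Fin m) ℂ) := Matrix.linftyOpNormedAlgebra
  letI : SeminormedRing (Matrix (Fin n) (Fin n) ℂ) := Matrix.linftyOpSemiNormedRing
  letI : NormedRing (Matrix (Fin n) (Fin n) ℂ) := Matrix.linftyOpNormedRing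
  letI : NormedAlgebra ℂ (Matrix (Fin n) (Fin n) ℂ) := Matrix.linftyOpNormedAlgebra
  have hΦc : Continuous Φ := Φ.continuous_of_finiteDimensional
  have hsum : Summable fun k : ℕ => M * ((k.factorial : ℂ)⁻¹ • B ^ k) :=
    (NormedSpace.expSeries_summable' (𝕂 := ℂ) B).mul_left M
  simp only [exp_eq_tsum (𝕂 := ℂ)]
  erw [
    ← Summable.tsum_mul_left _ (NormedSpace.expSeries_summable' (𝕂 := ℂ) A),
    ← Summable.tsum_mul_left _ (NormedSpace.expSeries_summable' (𝕂 := ℂ) B)]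
  erw [hsum.hasSum.map Φ hΦc |>.tsum_eq.symm]
  refine tsum_congr fun k => ?_
  simp only [Function.comp_apply, mul_smul_comm, h k, map_smul]

private noncomputable def encL {a b c : ℕ} (V : Matrix (Fin c) (Fin a × Fin b) ℂ)
    (τ : Matrix (Fin b) (Fin b) ℂ) :
    Matrix (Fin a) (Fin a) ℂ →ₗ[ℂ] Matrix (Fin c) (Fin c) ℂ where
  toFun M := V * (M ⊗ₖ τ) * V.conjTranspose
  map_add' M N := by simp [Matrix.add_kronecker, Matrix.add_mul, Matrix.mul_add]
  map_smul' r M := by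
    simp [Matrix.smul_kronecker, Matrix.mul_smul, Matrix.smul_mul]

/-- For a standard encoding `E_obs(M) = V(M ⊗ P)V†`, `E_state(ρ) = V(ρ ⊗ τ)V†` (with `V` an
isometry, `P` a nonzero projector, `τ` a density matrix with `Pτ = τP = τ`), time evolution is
consistent: `e^{−i E_obs(H) t} E_state(ρ) e^{i E_obs(H) t} = E_state(e^{−iHt} ρ e^{iHt})`. -/
theorem stmt13 {a b c : ℕ} (V : Matrix (Fin c) (Fin a × Fin b) ℂ)
    (hV : V.conjTranspose * V = 1)
    (P : Matrix (Fin b) (Fin b) ℂ) (hPh : P.IsHermitian) (hPi : P * P = P) (hP0 : P ≠ 0)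
    (τ : Matrix (Fin b) (Fin b) ℂ) (hτ : τ.PosSemidef) (hτtr : τ.trace = 1)
    (hPτ : P * τ = τ) (hτP : τ * P = τ)
    (H : Matrix (Fin a) (Fin a) ℂ) (hH : H.IsHermitian)
    (ρ : Matrix (Fin a) (Fin a) ℂ) (hρ : ρ.PosSemidef) (hρtr : ρ.trace = 1) (t : ℝ) :
    NormedSpace.exp ((-(Complex.I * t)) • (V * (H ⊗ₖ P) * V.conjTranspose)) *
        (V * (ρ ⊗ₖ τ) * V.conjTranspose) *
        NormedSpace.exp ((Complex.I * t) • (V * (H ⊗ₖ P) * V.conjTranspose)) =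
      V * ((NormedSpace.exp ((-(Complex.I * t)) • H) * ρ *
        NormedSpace.exp ((Complex.I * t) • H)) ⊗ₖ τ) * V.conjTranspose := by
  have hmid : ∀ X : Matrix (Fin a × Fin b) (Fin c) ℂ,
      V.conjTranspose * (V * X) = X := fun X => by
    rw [← Matrix.mul_assoc, hV, Matrix.one_mul]
  have step : ∀ X : Matrix (Fin a) (Fin a) ℂ,
      (V * (H ⊗ₖ P) * V.conjTranspose) * (V * (X ⊗ₖ τ) * V.conjTranspose) =
        V * ((H * X) ⊗ₖ τ) * V.conjTranspose := by
    intro X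
    simp only [Matrix.mul_assoc]
    rw [hmid, ← Matrix.mul_assoc (H ⊗ₖ P), ← Matrix.mul_kronecker_mul, hPτ]
  have stepR : ∀ X : Matrix (Fin a) (Fin a) ℂ,
      (V * (X ⊗ₖ τ) * V.conjTranspose) * (V * (H ⊗ₖ P) * V.conjTranspose) =
        V * ((X * H) ⊗ₖ τ) * V.conjTranspose := by
    intro X
    simp only [Matrix.mul_assoc]
    rw [hmid, ← Matrix.mul_assoc (X ⊗ₖ τ), ← Matrix.mul_kronecker_mul, hτP]
  have keyL : ∀ (s : ℂ) (k : ℕ),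
      (s • (V * (H ⊗ₖ P) * V.conjTranspose)) ^ k * (V * (ρ ⊗ₖ τ) * V.conjTranspose) =
        V * (((s • H) ^ k * ρ) ⊗ₖ τ) * V.conjTranspose := by
    intro s k
    induction k with
    | zero => simp
    | succ k ih =>
      rw [pow_succ', Matrix.mul_assoc, ih, smul_mul_assoc, step]
      simp [pow_succ', smul_mul_assoc, Matrix.mul_assoc, Matrix.smul_kronecker,
        Matrix.mul_smul, Matrix.smul_mul]
  have keyR : ∀ (s : ℂ) (k : ℕ) (M : Matrix (Fin a) (Fin a) ℂ),
      (V * (M ⊗ₖ τ) * V.conjTranspose) * (s • (V * (H ⊗ₖ P) * V.conjTranspose)) ^ k =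
        V * ((M * (s • H) ^ k) ⊗ₖ τ) * V.conjTranspose := by
    intro s k M
    induction k with
    | zero => simp
    | succ k ih =>
      rw [pow_succ, ← Matrix.mul_assoc, ih, mul_smul_comm, stepR]
      simp [pow_succ, mul_smul_comm, ← Matrix.mul_assoc, Matrix.smul_kronecker,
        Matrix.mul_smul, Matrix.smul_mul]
  have h1 : NormedSpace.exp ((-(Complex.I * t)) • (V * (H ⊗ₖ P) * V.conjTranspose)) *
      (V * (ρ ⊗ₖ τ) * V.conjTranspose) =
      V * ((NormedSpace.exp ((-(Complex.I * t)) • H) * ρ) ⊗ₖ τ) * V.conjTranspose :=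
    exp_mul_lin (encL V τ) _ _ ρ (fun k => keyL _ k)
  have h2 : (V * ((NormedSpace.exp ((-(Complex.I * t)) • H) * ρ) ⊗ₖ τ) * V.conjTranspose) *
      NormedSpace.exp ((Complex.I * t) • (V * (H ⊗ₖ P) * V.conjTranspose)) =
      V * ((NormedSpace.exp ((-(Complex.I * t)) • H) * ρ *
        NormedSpace.exp ((Complex.I * t) • H)) ⊗ₖ τ) * V.conjTranspose :=
    mul_exp_lin (encL V τ) _ _ _ (fun k => keyR _ k _)
  rw [h1, h2]
end

section
/- Let H′ = H_I ⊗ I + H_X ⊗ X + H_{|1⟩⟨1|} ⊗ |1⟩⟨1| be a Hermitian operator on H ⊗ ℂ², where H_{|1⟩⟨1|}² = ω² I with ω = 2π/δt for some δt > 0. Then the sum Σ_{k≥2} ((−i δt)^k / k!) H_X H_{|1⟩⟨1|}^{k−2} H_X equals i δt ω^{−2} H_X H_{|1⟩⟨1|} H_X, and Σ_{k≥1} ((−i δt)^k / k!) H_{|1⟩⟨1|}^{k−1} H_X = 0. -/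
open scoped Real

/-- Series identities for the Zeno measurement gadget: if `H_{|1⟩⟨1|}² = ω² I` with
`ω = 2π/δt`, then `Σ_{k≥2} ((−iδt)^k/k!) H_X H_{|1⟩⟨1|}^{k−2} H_X
 = iδt ω^{−2} H_X H_{|1⟩⟨1|} H_X` and `Σ_{k≥1} ((−iδt)^k/k!) H_{|1⟩⟨1|}^{k−1} H_X = 0`. -/
theorem stmt16 {E : Type*} [NormedAddCommGroup E] [InnerProductSpace ℂ E]
    [FiniteDimensional ℂ E] (HI HX H1 : E →L[ℂ] E)
    (hHI : IsSelfAdjoint HI) (hHX : IsSelfAdjoint HX) (hH1 : IsSelfAdjoint H1)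
    (δt ω : ℝ) (hδt : 0 < δt) (hω : ω = 2 * π / δt)
    (hsq : H1 * H1 = (ω ^ 2 : ℝ) • (1 : E →L[ℂ] E)) :
    (∑' k : ℕ, ((-(Complex.I * δt)) ^ (k + 2) / ((k + 2).factorial : ℂ)) •
        (HX * H1 ^ k * HX)) =
      ((Complex.I * δt) * ((ω : ℂ) ^ 2)⁻¹) • (HX * H1 * HX) ∧
    (∑' k : ℕ, ((-(Complex.I * δt)) ^ (k + 1) / ((k + 1).factorial : ℂ)) •
        (H1 ^ k * HX)) = 0 := by
  have hπ : (0 : ℝ) < π := Real.pi_pos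
  have hδ0 : (δt : ℂ) ≠ 0 := by exact_mod_cast hδt.ne'
  have hωpos : 0 < ω := by rw [hω]; positivity
  have hω0 : (ω : ℂ) ≠ 0 := by exact_mod_cast hωpos.ne'
  set z : ℂ := -(Complex.I * (δt : ℂ)) with hz
  set w : ℂ := -(2 * (π : ℂ)) * Complex.I with hwdef
  have hws : w = z * (ω : ℂ) := by
    rw [hwdef, hz, hω]
    push_cast
    field_simp
  -- series for cos
  have hc1 : Complex.cos (-(2 * (π : ℂ))) = 1 := by
    rw [Complex.cos_neg, show (2 * (π : ℂ)) = (((2 * π : ℝ)) : ℂ) from by push_cast; ring,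
      ← Complex.ofReal_cos, Real.cos_two_pi, Complex.ofReal_one]
  have hcos : HasSum (fun n : ℕ => w ^ (2 * n) / ((2 * n).factorial : ℂ)) 1 := by
    have h := Complex.hasSum_cos' (-(2 * (π : ℂ)))
    rw [hc1] at h
    exact h
  -- series for sin
  have hs1 : Complex.sin (-(2 * (π : ℂ))) = 0 := by
    rw [Complex.sin_neg, show (2 * (π : ℂ)) = (((2 * π : ℝ)) : ℂ) from by push_cast; ring,
      ← Complex.ofReal_sin, Real.sin_two_pi, Complex.ofReal_zero, neg_zero]
  have hsin : HasSum (fun n : ℕ => w ^ (2 * n + 1) / ((2 * n + 1).factorial : ℂ)) 0 := by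
    have h := (Complex.hasSum_sin' (-(2 * (π : ℂ)))).mul_right Complex.I
    rw [hs1, zero_mul] at h
    have : (fun n : ℕ => w ^ (2 * n + 1) / ((2 * n + 1).factorial : ℂ)) =
        fun n : ℕ => (-(2 * (π : ℂ)) * Complex.I) ^ (2 * n + 1) /
          ((2 * n + 1).factorial : ℂ) / Complex.I * Complex.I := by
      funext n
      rw [div_mul_cancel₀ _ Complex.I_ne_zero, hwdef]
    rw [this]
    exact h
  -- shifted series
  have hcos1 : HasSum (fun n : ℕ => w ^ (2 * (n + 1)) / ((2 * (n + 1)).factorial : ℂ)) 0 := by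
    have h := (hasSum_nat_add_iff'
      (f := fun m : ℕ => w ^ (2 * m) / ((2 * m).factorial : ℂ)) 1).mpr hcos
    simpa using h
  have hsin3 : HasSum (fun n : ℕ => w ^ (2 * (n + 1) + 1) /
      ((2 * (n + 1) + 1).factorial : ℂ)) (-w) := by
    have h := (hasSum_nat_add_iff'
      (f := fun m : ℕ => w ^ (2 * m + 1) / ((2 * m + 1).factorial : ℂ)) 1).mpr hsin
    simpa using h
  -- powers of H1
  have hsqC : H1 * H1 = ((ω : ℂ) ^ 2) • (1 : E →L[ℂ] E) := by
    rw [hsq, ← algebraMap_smul ℂ ((ω : ℝ) ^ 2) (1 : E →L[ℂ] E)]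
    norm_num [Complex.coe_algebraMap]
  have hpe : ∀ m : ℕ, H1 ^ (2 * m) = (((ω : ℂ) ^ 2) ^ m) • (1 : E →L[ℂ] E) := by
    intro m
    induction m with
    | zero => simp
    | succ m ih =>
      rw [show 2 * (m + 1) = 2 * m + 2 from by ring, pow_add, ih, pow_two H1, hsqC,
        smul_mul_smul_comm]
      simp [pow_succ]
  have hpo : ∀ m : ℕ, H1 ^ (2 * m + 1) = (((ω : ℂ) ^ 2) ^ m) • H1 := by
    intro m
    rw [pow_succ, hpe m, smul_mul_assoc, one_mul]
  have hfac : ∀ n : ℕ, ((n.factorial : ℕ) : ℂ) ≠ 0 :=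
    fun n => Nat.cast_ne_zero.2 (Nat.factorial_ne_zero n)
  have hinv1 : (ω : ℂ)⁻¹ * (ω : ℂ) = 1 := inv_mul_cancel₀ hω0
  have hinv2 : ((ω : ℂ) ^ 2)⁻¹ * (ω : ℂ) ^ 2 = 1 := inv_mul_cancel₀ (pow_ne_zero 2 hω0)
  have hinv3 : ((ω : ℂ) ^ 3)⁻¹ * (ω : ℂ) ^ 3 = 1 := inv_mul_cancel₀ (pow_ne_zero 3 hω0)
  -- scalar series with Ω = ω²
  have hsc1 : HasSum (fun m : ℕ => z ^ (2 * m + 1) / ((2 * m + 1).factorial : ℂ) *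
      ((ω : ℂ) ^ 2) ^ m) 0 := by
    have h := hsin.mul_left ((ω : ℂ)⁻¹)
    rw [mul_zero] at h
    have hfun : (fun m : ℕ => z ^ (2 * m + 1) / ((2 * m + 1).factorial : ℂ) *
        ((ω : ℂ) ^ 2) ^ m) =
        fun m : ℕ => (ω : ℂ)⁻¹ * (w ^ (2 * m + 1) / ((2 * m + 1).factorial : ℂ)) := by
      funext m
      rw [hws]
      linear_combination (-(z ^ (2 * m + 1) * ((ω : ℂ) ^ 2) ^ m /
        (((2 * m + 1).factorial : ℕ) : ℂ))) * hinv1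
    rw [hfun]
    exact h
  have hsc2 : HasSum (fun m : ℕ => z ^ (2 * m + 2) / ((2 * m + 2).factorial : ℂ) *
      ((ω : ℂ) ^ 2) ^ m) 0 := by
    have h := hcos1.mul_left (((ω : ℂ) ^ 2)⁻¹)
    rw [mul_zero] at h
    have hfun : (fun m : ℕ => z ^ (2 * m + 2) / ((2 * m + 2).factorial : ℂ) *
        ((ω : ℂ) ^ 2) ^ m) =
        fun m : ℕ => ((ω : ℂ) ^ 2)⁻¹ *
          (w ^ (2 * (m + 1)) / ((2 * (m + 1)).factorial : ℂ)) := by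
      funext m
      rw [show 2 * (m + 1) = 2 * m + 2 from by ring, hws]
      linear_combination (-(z ^ (2 * m + 2) * ((ω : ℂ) ^ 2) ^ m /
        (((2 * m + 2).factorial : ℕ) : ℂ))) * hinv2
    rw [hfun]
    exact h
  have hsc3 : HasSum (fun m : ℕ => z ^ (2 * m + 3) / ((2 * m + 3).factorial : ℂ) *
      ((ω : ℂ) ^ 2) ^ m) ((Complex.I * δt) * ((ω : ℂ) ^ 2)⁻¹) := by
    have h := hsin3.mul_left (((ω : ℂ) ^ 3)⁻¹)
    have hval : ((ω : ℂ) ^ 3)⁻¹ * (-w) = (Complex.I * δt) * ((ω : ℂ) ^ 2)⁻¹ := by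
      rw [hws, hz]
      linear_combination (Complex.I * (δt : ℂ) * ((ω : ℂ)⁻¹) ^ 2) * hinv1
    rw [hval] at h
    have hfun : (fun m : ℕ => z ^ (2 * m + 3) / ((2 * m + 3).factorial : ℂ) *
        ((ω : ℂ) ^ 2) ^ m) =
        fun m : ℕ => ((ω : ℂ) ^ 3)⁻¹ *
          (w ^ (2 * (m + 1) + 1) / ((2 * (m + 1) + 1).factorial : ℂ)) := by
      funext m
      rw [show 2 * (m + 1) + 1 = 2 * m + 3 from by ring, hws]
      linear_combination (-(z ^ (2 * m + 3) * ((ω : ℂ) ^ 2) ^ m /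
        (((2 * m + 3).factorial : ℕ) : ℂ))) * hinv3
    rw [hfun]
    exact h
  constructor
  · -- first identity
    have he : HasSum (fun m : ℕ => (z ^ (2 * m + 2) / ((2 * m + 2).factorial : ℂ)) •
        (HX * H1 ^ (2 * m) * HX)) 0 := by
      have hfun : (fun m : ℕ => (z ^ (2 * m + 2) / ((2 * m + 2).factorial : ℂ)) •
          (HX * H1 ^ (2 * m) * HX)) =
          fun m : ℕ => (z ^ (2 * m + 2) / ((2 * m + 2).factorial : ℂ) *
            ((ω : ℂ) ^ 2) ^ m) • (HX * HX) := by
        funext m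
        rw [hpe m, mul_smul_comm, mul_one, smul_mul_assoc, smul_smul]
      rw [hfun]
      simpa using hsc2.smul_const (HX * HX)
    have ho : HasSum (fun m : ℕ => (z ^ (2 * m + 3) / ((2 * m + 3).factorial : ℂ)) •
        (HX * H1 ^ (2 * m + 1) * HX)) (((Complex.I * δt) * ((ω : ℂ) ^ 2)⁻¹) •
        (HX * H1 * HX)) := by
      have hfun : (fun m : ℕ => (z ^ (2 * m + 3) / ((2 * m + 3).factorial : ℂ)) •
          (HX * H1 ^ (2 * m + 1) * HX)) =
          fun m : ℕ => (z ^ (2 * m + 3) / ((2 * m + 3).factorial : ℂ) *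
            ((ω : ℂ) ^ 2) ^ m) • (HX * H1 * HX) := by
        funext m
        rw [hpo m, mul_smul_comm, smul_mul_assoc, smul_smul]
      rw [hfun]
      exact hsc3.smul_const (HX * H1 * HX)
    have hmain : HasSum (fun k : ℕ => (z ^ (k + 2) / ((k + 2).factorial : ℂ)) •
        (HX * H1 ^ k * HX))
        (0 + ((Complex.I * δt) * ((ω : ℂ) ^ 2)⁻¹) • (HX * H1 * HX)) :=
      HasSum.even_add_odd (f := fun k : ℕ => (z ^ (k + 2) / ((k + 2).factorial : ℂ)) •
        (HX * H1 ^ k * HX)) he ho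
    rw [zero_add] at hmain
    exact hmain.tsum_eq
  · -- second identity
    have he : HasSum (fun m : ℕ => (z ^ (2 * m + 1) / ((2 * m + 1).factorial : ℂ)) •
        (H1 ^ (2 * m) * HX)) 0 := by
      have hfun : (fun m : ℕ => (z ^ (2 * m + 1) / ((2 * m + 1).factorial : ℂ)) •
          (H1 ^ (2 * m) * HX)) =
          fun m : ℕ => (z ^ (2 * m + 1) / ((2 * m + 1).factorial : ℂ) *
            ((ω : ℂ) ^ 2) ^ m) • HX := by
        funext m
        rw [hpe m, smul_mul_assoc, one_mul, smul_smul]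
      rw [hfun]
      simpa using hsc1.smul_const HX
    have ho : HasSum (fun m : ℕ => (z ^ (2 * m + 2) / ((2 * m + 2).factorial : ℂ)) •
        (H1 ^ (2 * m + 1) * HX)) 0 := by
      have hfun : (fun m : ℕ => (z ^ (2 * m + 2) / ((2 * m + 2).factorial : ℂ)) •
          (H1 ^ (2 * m + 1) * HX)) =
          fun m : ℕ => (z ^ (2 * m + 2) / ((2 * m + 2).factorial : ℂ) *
            ((ω : ℂ) ^ 2) ^ m) • (H1 * HX) := by
        funext m
        rw [hpo m, smul_mul_assoc, smul_smul]
      rw [hfun]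
      simpa using hsc2.smul_const (H1 * HX)
    have hmain : HasSum (fun k : ℕ => (z ^ (k + 1) / ((k + 1).factorial : ℂ)) •
        (H1 ^ k * HX)) ((0 : E →L[ℂ] E) + 0) :=
      HasSum.even_add_odd (f := fun k : ℕ => (z ^ (k + 1) / ((k + 1).factorial : ℂ)) •
        (H1 ^ k * HX)) he ho
    rw [add_zero] at hmain
    exact hmain.tsum_eq
end

section
/- Let H = J Z^{⊗k} on (ℂ²)^{⊗k} for J > 0. For x ∈ {0,1}^k let |ψ_x⟩ be the computational basis state. Then the function F(x) = ⟨ψ_x| H |ψ_x⟩ = J (−1)^{x₁+⋯+x_k} is k-local but, for any k′ < k, cannot be uniformly approximated by any k′-local function g : {0,1}^k → ℝ to accuracy better than 2^{−k′} J; i.e., max_x |F(x) − g(x)| ≥ 2^{−k′} J for every k′-local g. -/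
lemma asum_local_zero {k : ℕ} (S : Finset (Fin k)) (hS : S.card < k)
    (gi : (Fin k → Bool) → ℝ)
    (hloc : ∀ x y, (∀ j ∈ S, x j = y j) → gi x = gi y) :
    (∑ s ∈ (Finset.univ : Finset (Fin k)).powerset,
      (-1:ℝ)^s.card * gi (fun j => decide (j ∈ s))) = 0 := by
  have hcompl : Sᶜ.Nonempty := by
    rw [← Finset.card_pos, Finset.card_compl, Fintype.card_fin]
    omega
  obtain ⟨j0, hj0'⟩ := hcompl
  have hj0 : j0 ∉ S := Finset.mem_compl.mp hj0'
  have huniv : (Finset.univ : Finset (Fin k)) = insert j0 (Finset.univ.erase j0) := by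
    rw [Finset.insert_erase (Finset.mem_univ j0)]
  rw [huniv, Finset.sum_powerset_insert (Finset.notMem_erase j0 _),
    ← Finset.sum_add_distrib]
  apply Finset.sum_eq_zero
  intro s hs
  have hj0s : j0 ∉ s := by
    intro hmem
    exact Finset.notMem_erase j0 _ (Finset.mem_powerset.mp hs hmem)
  have hcard : (insert j0 s).card = s.card + 1 := Finset.card_insert_of_notMem hj0s
  have hval : gi (fun j => decide (j ∈ insert j0 s)) = gi (fun j => decide (j ∈ s)) := by
    apply hloc
    intro j hj
    have : j ≠ j0 := fun h => hj0 (h ▸ hj)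
    simp [Finset.mem_insert, this]
  rw [hcard, hval, pow_succ]
  ring

/-- The diagonal expectation function of `H = J Z^{⊗k}` on computational basis states,
`F(x) = J·(−1)^{x₁+⋯+x_k}`, is `k`-local, but for any `k′ < k` it cannot be uniformly
approximated by any `k′`-local function to accuracy better than `2^{−k′} J`. -/
theorem stmt18 {k k' : ℕ} (J : ℝ) (hJ : 0 < J) (hkk' : k' < k)
    (F : (Fin k → Bool) → ℝ)
    (hF : ∀ x, F x = J * (-1 : ℝ) ^ ((Finset.univ.filter fun j => x j = true).card)) :
    IsKLocal k F ∧
      ∀ g : (Fin k → Bool) → ℝ, IsKLocal k' g →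
        ∃ x, (2 : ℝ) ^ (-(k' : ℤ)) * J ≤ |F x - g x| := by
  constructor
  · refine ⟨1, fun _ => F, fun _ => Finset.univ, ?_, ?_, ?_⟩
    · intro i; simp
    · intro i x y h
      have : x = y := funext fun j => h j (Finset.mem_univ j)
      rw [this]
    · intro x; simp
  · rintro g ⟨m, gs, S, hcard, hloc, hsum⟩
    by_contra hcon
    push_neg at hcon
    set P := (Finset.univ : Finset (Fin k)).powerset with hP
    have hPcard : P.card = 2 ^ k := by
      rw [hP, Finset.card_powerset, Finset.card_univ, Fintype.card_fin]
    -- value on F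
    have hAF : ∑ s ∈ P, (-1:ℝ)^s.card * F (fun j => decide (j ∈ s)) = 2 ^ k * J := by
      have hterm : ∀ s ∈ P, (-1:ℝ)^s.card * F (fun j => decide (j ∈ s)) = J := by
        intro s _
        rw [hF]
        have hfilt : (Finset.univ.filter fun j => (decide (j ∈ s)) = true) = s := by
          ext j; simp
        rw [hfilt, ← mul_assoc, mul_comm ((-1:ℝ)^s.card) J, mul_assoc,
          ← pow_add, ← two_mul, pow_mul]
        norm_num
      rw [Finset.sum_congr rfl hterm, Finset.sum_const, hPcard, nsmul_eq_mul]
      push_cast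
      ring
    -- value on g
    have hAg : ∑ s ∈ P, (-1:ℝ)^s.card * g (fun j => decide (j ∈ s)) = 0 := by
      have : ∀ s ∈ P, (-1:ℝ)^s.card * g (fun j => decide (j ∈ s)) =
          ∑ i, (-1:ℝ)^s.card * gs i (fun j => decide (j ∈ s)) := by
        intro s _
        rw [hsum, Finset.mul_sum]
      rw [Finset.sum_congr rfl this, Finset.sum_comm]
      apply Finset.sum_eq_zero
      intro i _
      exact asum_local_zero (S i) (lt_of_le_of_lt (hcard i) hkk') (gs i) (hloc i)
    have key : ∑ s ∈ P, (-1:ℝ)^s.card * (F (fun j => decide (j ∈ s)) -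
        g (fun j => decide (j ∈ s))) = 2 ^ k * J := by
      simp only [mul_sub]
      rw [Finset.sum_sub_distrib, hAF, hAg, sub_zero]
    have hbound : (2:ℝ) ^ k * J ≤
        ∑ s ∈ P, |F (fun j => decide (j ∈ s)) - g (fun j => decide (j ∈ s))| := by
      calc (2:ℝ) ^ k * J = |∑ s ∈ P, (-1:ℝ)^s.card * (F (fun j => decide (j ∈ s)) -
            g (fun j => decide (j ∈ s)))| := by
            rw [key, abs_of_pos (by positivity)]
        _ ≤ ∑ s ∈ P, |(-1:ℝ)^s.card * (F (fun j => decide (j ∈ s)) -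
            g (fun j => decide (j ∈ s)))| := Finset.abs_sum_le_sum_abs _ _
        _ = ∑ s ∈ P, |F (fun j => decide (j ∈ s)) - g (fun j => decide (j ∈ s))| := by
            apply Finset.sum_congr rfl
            intro s _
            rw [abs_mul, abs_pow, abs_neg, abs_one, one_pow, one_mul]
    have hPne : P.Nonempty := ⟨∅, Finset.empty_mem_powerset _⟩
    have hlt : ∑ s ∈ P, |F (fun j => decide (j ∈ s)) - g (fun j => decide (j ∈ s))| <
        ∑ _s ∈ P, (2:ℝ) ^ (-(k' : ℤ)) * J :=
      Finset.sum_lt_sum_of_nonempty hPne (fun s _ => hcon _)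
    have hrhs : ∑ _s ∈ P, (2:ℝ) ^ (-(k' : ℤ)) * J ≤ (2:ℝ) ^ k * J := by
      rw [Finset.sum_const, hPcard, nsmul_eq_mul]
      have h1 : (2:ℝ) ^ (-(k' : ℤ)) ≤ 1 := by
        rw [zpow_neg, zpow_natCast]
        exact inv_le_one_of_one_le₀ (one_le_pow₀ (by norm_num))
      push_cast
      calc (2:ℝ) ^ k * ((2:ℝ) ^ (-(k' : ℤ)) * J) ≤ (2:ℝ) ^ k * (1 * J) := by
            apply mul_le_mul_of_nonneg_left _ (by positivity)
            exact mul_le_mul_of_nonneg_right h1 hJ.le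
        _ = (2:ℝ) ^ k * J := by ring
    linarith
end

section
/- Let H be Hermitian on H = (ℂ²)^{⊗k} with H = J Z^{⊗k}, J > 0, and suppose H′ is a k′-local Hermitian operator on H ⊗ A (acting k′-locally with respect to the qubit sites of H and sites of A), k′ < k. Suppose there exist a nonzero orthogonal projector P on A and a unitary U on H ⊗ A with ‖U − I‖ ≤ η and ‖P′ H′ P′ − U(H ⊗ P)U†‖ ≤ ε, where P′ = U(I ⊗ P)U†. If ε < 2^{−k′} J, then ‖H′‖ ≥ (2^{−k′} J − ε) / (2η). -/
/-- Basis labels for a system of `k` qubits together with `a` ancilla sites of local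
dimension `q`. -/
abbrev GBasis (k a q : ℕ) := (Fin k → Fin 2) × (Fin a → Fin q)

/-- A matrix on the joint system is supported on the sites `S₁` (qubits) and `S₂` (ancilla
sites) if it acts as the identity on all other sites. -/
def SupportedOn {k a q : ℕ} (S₁ : Finset (Fin k)) (S₂ : Finset (Fin a))
    (M : Matrix (GBasis k a q) (GBasis k a q) ℂ) : Prop :=
  (∀ x y : GBasis k a q,
    ((∃ j ∉ S₁, x.1 j ≠ y.1 j) ∨ (∃ j ∉ S₂, x.2 j ≠ y.2 j)) → M x y = 0) ∧
  (∀ x y x' y' : GBasis k a q,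
    (∀ j ∈ S₁, x.1 j = x'.1 j) → (∀ j ∈ S₂, x.2 j = x'.2 j) →
    (∀ j ∈ S₁, y.1 j = y'.1 j) → (∀ j ∈ S₂, y.2 j = y'.2 j) →
    (∀ j ∉ S₁, x.1 j = y.1 j) → (∀ j ∉ S₂, x.2 j = y.2 j) →
    (∀ j ∉ S₁, x'.1 j = y'.1 j) → (∀ j ∉ S₂, x'.2 j = y'.2 j) → M x y = M x' y')

/-- A matrix on the joint system is `k′`-local if it is a finite sum of terms, each acting
nontrivially on at most `k′` sites (qubits and ancilla sites together). -/
def IsKLocalOp {k a q : ℕ} (k' : ℕ) (M : Matrix (GBasis k a q) (GBasis k a q) ℂ) : Prop :=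
  ∃ (m : ℕ) (T : Fin m → Matrix (GBasis k a q) (GBasis k a q) ℂ)
    (S₁ : Fin m → Finset (Fin k)) (S₂ : Fin m → Finset (Fin a)),
    (∀ i, (S₁ i).card + (S₂ i).card ≤ k') ∧
    (∀ i, SupportedOn (S₁ i) (S₂ i) (T i)) ∧ M = ∑ i, T i


open scoped InnerProductSpace


noncomputable def opN {n : Type*} [Fintype n] [DecidableEq n] (M : Matrix n n ℂ) : ℝ :=
  ‖Matrix.toEuclideanCLM (𝕜 := ℂ) M‖

noncomputable def gvec {k a q : ℕ} (c : (Fin a → Fin q) → ℂ) (x : Fin k → Fin 2) :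
    EuclideanSpace ℂ (GBasis k a q) := WithLp.toLp 2 (fun z : GBasis k a q => (if z.1 = x then 1 else 0) * c z.2)

noncomputable def chiF {k : ℕ} (x : Fin k → Fin 2) : ℂ := ∏ j, if x j = 0 then 1 else -1

noncomputable def matF {k a q : ℕ} (c : (Fin a → Fin q) → ℂ)
    (M : Matrix (GBasis k a q) (GBasis k a q) ℂ) (x : Fin k → Fin 2) : ℂ :=
  ∑ s, ∑ t, (starRingEnd ℂ) (c s) * (M (x, s) (x, t) * c t)

section basic
variable {n : Type*} [Fintype n] [DecidableEq n]

lemma clm_apply' (M : Matrix n n ℂ) (v : EuclideanSpace ℂ n) (z : n) :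
    Matrix.toEuclideanCLM (𝕜 := ℂ) M v z = ∑ z', M z z' * v z' := by
  have h := congrFun (Matrix.ofLp_toEuclideanCLM (𝕜 := ℂ) M v) z
  simpa [Matrix.toLin'_apply, Matrix.mulVec, dotProduct] using h

lemma inner_clm (M : Matrix n n ℂ) (v w : EuclideanSpace ℂ n) :
    (inner ℂ v (Matrix.toEuclideanCLM (𝕜 := ℂ) M w) : ℂ) =
      ∑ z, ∑ z', (starRingEnd ℂ) (v z) * (M z z' * w z') := by
  simp [PiLp.inner_apply, clm_apply', Finset.mul_sum]
  refine Finset.sum_congr rfl fun z _ => ?_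
  rw [Finset.sum_mul]
  refine Finset.sum_congr rfl fun z' _ => ?_
  ring

lemma inner_le' (M : Matrix n n ℂ) (v : EuclideanSpace ℂ n) :
    ‖(inner ℂ v (Matrix.toEuclideanCLM (𝕜 := ℂ) M v) : ℂ)‖ ≤ opN M * Complex.re (inner ℂ v v) := by
  calc ‖(inner ℂ v (Matrix.toEuclideanCLM (𝕜 := ℂ) M v) : ℂ)‖
      ≤ ‖v‖ * ‖Matrix.toEuclideanCLM (𝕜 := ℂ) M v‖ := norm_inner_le_norm _ _
    _ ≤ ‖v‖ * (‖Matrix.toEuclideanCLM (𝕜 := ℂ) M‖ * ‖v‖) := by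
        gcongr; exact ContinuousLinearMap.le_opNorm _ _
    _ = opN M * Complex.re (inner ℂ v v) := by
        rw [show ((inner ℂ v v : ℂ)).re = ‖v‖ * ‖v‖ from inner_self_eq_norm_mul_norm (𝕜 := ℂ) v]
        unfold opN; ring

lemma opN_nonneg (M : Matrix n n ℂ) : 0 ≤ opN M := norm_nonneg _

lemma opN_mul_le (A B : Matrix n n ℂ) : opN (A * B) ≤ opN A * opN B := by
  unfold opN; rw [map_mul]; exact norm_mul_le _ _

lemma opN_add_le (A B : Matrix n n ℂ) : opN (A + B) ≤ opN A + opN B := by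
  unfold opN; rw [map_add]; exact norm_add_le _ _

variable [Nonempty n]

lemma norm_unitary (U : Matrix n n ℂ) (h : U.conjTranspose * U = 1) : opN U = 1 := by
  have h2 : star (Matrix.toEuclideanCLM (𝕜 := ℂ) U) * Matrix.toEuclideanCLM (𝕜 := ℂ) U = 1 := by
    rw [← map_star, ← map_mul, ← Matrix.star_eq_conjTranspose] at *
    rw [h, map_one]
  have h3 := CStarRing.norm_star_mul_self (x := Matrix.toEuclideanCLM (𝕜 := ℂ) U)
  haveI : Nontrivial (EuclideanSpace ℂ n) := by infer_instance
  rw [h2, norm_one] at h3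
  unfold opN
  nlinarith [norm_nonneg (Matrix.toEuclideanCLM (𝕜 := ℂ) U)]

omit [Nonempty n] in
lemma norm_proj_le (Q : Matrix n n ℂ) (hh : Q.conjTranspose = Q) (hi : Q * Q = Q) :
    opN Q ≤ 1 := by
  have h2 : star (Matrix.toEuclideanCLM (𝕜 := ℂ) Q) * Matrix.toEuclideanCLM (𝕜 := ℂ) Q =
      Matrix.toEuclideanCLM (𝕜 := ℂ) Q := by
    rw [← map_star, ← map_mul, ← Matrix.star_eq_conjTranspose] at *
    rw [hh, hi]
  have h3 := CStarRing.norm_star_mul_self (x := Matrix.toEuclideanCLM (𝕜 := ℂ) Q)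
  rw [h2] at h3
  unfold opN
  nlinarith [norm_nonneg (Matrix.toEuclideanCLM (𝕜 := ℂ) Q)]

lemma norm_conj_eq (U M : Matrix n n ℂ) (h1 : U * U.conjTranspose = 1)
    (h2 : U.conjTranspose * U = 1) :
    opN (U * M * U.conjTranspose) = opN M := by
  have hu : opN U = 1 := norm_unitary U h2
  have hus : opN U.conjTranspose = 1 := by
    apply norm_unitary; rwa [Matrix.conjTranspose_conjTranspose]
  have key : ∀ (V W A : Matrix n n ℂ), opN V = 1 → opN W = 1 → opN (V * A * W) ≤ opN A := by
    intro V W A hV hW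
    calc opN (V * A * W) ≤ opN (V * A) * opN W := opN_mul_le _ _
      _ = opN (V * A) := by rw [hW, mul_one]
      _ ≤ opN V * opN A := opN_mul_le _ _
      _ = opN A := by rw [hV, one_mul]
  refine le_antisymm (key _ _ _ hu hus) ?_
  have hM : M = U.conjTranspose * (U * M * U.conjTranspose) * U := by
    simp only [Matrix.mul_assoc, h2]
    simp [← Matrix.mul_assoc, h2]
  calc opN M = opN (U.conjTranspose * (U * M * U.conjTranspose) * U) := by rw [← hM]
    _ ≤ opN (U * M * U.conjTranspose) := key _ _ _ hus hu

end basic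

section gv
variable {k a q : ℕ} (c : (Fin a → Fin q) → ℂ)

lemma inner_gvec_clm (M : Matrix (GBasis k a q) (GBasis k a q) ℂ) (x : Fin k → Fin 2) :
    (inner ℂ (gvec c x) (Matrix.toEuclideanCLM (𝕜 := ℂ) M (gvec c x)) : ℂ) = matF c M x := by
  rw [inner_clm]
  unfold matF gvec
  simp only [Fintype.sum_prod_type, WithLp.ofLp_toLp]
  rw [Finset.sum_eq_single x]
  · refine Finset.sum_congr rfl fun s _ => ?_
    rw [Finset.sum_eq_single x]
    · simp
    · intro y' _ hy'; simp [hy']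
    · simp
  · intro y _ hy; simp [hy]
  · simp

lemma inner_gvec_gvec (x : Fin k → Fin 2) :
    (inner ℂ (gvec c x) (gvec c x) : ℂ) = ∑ s, (starRingEnd ℂ) (c s) * c s := by
  have h := inner_gvec_clm (k := k) c 1 x
  rw [map_one] at h
  simp only [ContinuousLinearMap.one_apply] at h
  rw [h]
  unfold matF
  refine Finset.sum_congr rfl fun s _ => ?_
  rw [Finset.sum_eq_single s]
  · simp [Matrix.one_apply]
  · intro t _ ht
    have : ((x, s) : GBasis k a q) ≠ (x, t) := by simp [Prod.ext_iff, Ne.symm ht]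
    simp [Matrix.one_apply, this]
  · simp

lemma clm_Q_gvec (P : Matrix (Fin a → Fin q) (Fin a → Fin q) ℂ)
    (hc : ∀ s, ∑ t, P s t * c t = c s) (x : Fin k → Fin 2) :
    Matrix.toEuclideanCLM (𝕜 := ℂ) (Matrix.of fun z w : GBasis k a q =>
      (if z.1 = w.1 then 1 else 0) * P z.2 w.2) (gvec c x) = gvec c x := by
  ext z
  rw [clm_apply']
  unfold gvec
  simp only [Fintype.sum_prod_type, Matrix.of_apply, WithLp.ofLp_toLp]
  rw [Finset.sum_eq_single x]
  · by_cases hz : z.1 = x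
    · simp only [hz, if_pos rfl, one_mul]
      simpa using hc z.2
    · simp [hz]
  · intro y _ hy; simp [hy]
  · simp

lemma matF_sum {m : ℕ} (T : Fin m → Matrix (GBasis k a q) (GBasis k a q) ℂ)
    (x : Fin k → Fin 2) : matF c (∑ i, T i) x = ∑ i, matF c (T i) x := by
  unfold matF
  simp only [Matrix.sum_apply, Finset.sum_mul, Finset.mul_sum]
  rw [Finset.sum_congr rfl fun s (_ : s ∈ Finset.univ) => Finset.sum_comm]
  exact Finset.sum_comm

end gv

lemma chiF_mul_self {k : ℕ} (x : Fin k → Fin 2) : chiF x * chiF x = 1 := by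
  unfold chiF
  rw [← Finset.prod_mul_distrib]
  rw [Finset.prod_congr rfl (fun j _ => ?_), Finset.prod_const_one]
  split <;> norm_num

lemma chiF_norm {k : ℕ} (x : Fin k → Fin 2) : ‖chiF x‖ = 1 := by
  unfold chiF
  rw [norm_prod]
  rw [Finset.prod_congr rfl (fun j _ => ?_), Finset.prod_const_one]
  split <;> simp

lemma fourier_vanish {k a q : ℕ} (c : (Fin a → Fin q) → ℂ)
    (T : Matrix (GBasis k a q) (GBasis k a q) ℂ)
    (S₁ : Finset (Fin k)) (S₂ : Finset (Fin a)) (hcard : S₁.card < k)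
    (hsup : SupportedOn S₁ S₂ T) :
    ∑ x : Fin k → Fin 2, chiF x * matF c T x = 0 := by
  obtain ⟨j₀, hj₀⟩ : ∃ j₀, j₀ ∉ S₁ := by
    by_contra h
    push_neg at h
    have h1 : S₁ = Finset.univ := Finset.eq_univ_iff_forall.mpr h
    rw [h1, Finset.card_univ, Fintype.card_fin] at hcard
    omega
  have hfin : ∀ b : Fin 2, b + 1 + 1 = b := by decide
  set σ : (Fin k → Fin 2) → (Fin k → Fin 2) := fun x => Function.update x j₀ (x j₀ + 1) with hσ
  have hσσ : ∀ x, σ (σ x) = x := by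
    intro x; funext j
    by_cases hj : j = j₀
    · subst hj; simp [σ, Function.update_self, hfin]
    · simp [σ, Function.update_of_ne hj]
  have hfin2 : ∀ b : Fin 2, (if b + 1 = 0 then (1 : ℂ) else -1) =
      -(if b = 0 then 1 else -1) := by
    intro b; fin_cases b <;> simp <;> norm_num [Fin.ext_iff]
  have hchi : ∀ x, chiF (σ x) = -chiF x := by
    intro x
    unfold chiF
    rw [← Finset.mul_prod_erase Finset.univ _ (Finset.mem_univ j₀),
      ← Finset.mul_prod_erase Finset.univ (fun j => if x j = 0 then (1 : ℂ) else -1)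
        (Finset.mem_univ j₀)]
    have herase : ∏ j ∈ Finset.univ.erase j₀, (if σ x j = 0 then (1 : ℂ) else -1) =
        ∏ j ∈ Finset.univ.erase j₀, (if x j = 0 then (1 : ℂ) else -1) := by
      refine Finset.prod_congr rfl fun j hj => ?_
      have : j ≠ j₀ := Finset.ne_of_mem_erase hj
      simp [σ, Function.update_of_ne this]
    rw [herase]
    have : σ x j₀ = x j₀ + 1 := by simp [σ]
    rw [this, hfin2]
    ring
  have hmat : ∀ x, matF c T (σ x) = matF c T x := by
    intro x
    unfold matF
    refine Finset.sum_congr rfl fun s _ => Finset.sum_congr rfl fun t _ => ?_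
    have hTT : T (σ x, s) (σ x, t) = T (x, s) (x, t) := by
      by_cases hst : ∀ j ∉ S₂, s j = t j
      · refine hsup.2 (σ x, s) (σ x, t) (x, s) (x, t) ?_ (fun j _ => rfl) ?_ (fun j _ => rfl)
          (fun j _ => rfl) hst (fun j _ => rfl) hst
        · intro j hj
          have hne : j ≠ j₀ := fun hjj => hj₀ (hjj ▸ hj)
          exact Function.update_of_ne hne _ _
        · intro j hj
          have hne : j ≠ j₀ := fun hjj => hj₀ (hjj ▸ hj)
          exact Function.update_of_ne hne _ _
      · push_neg at hst
        obtain ⟨j, hj, hne⟩ := hst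
        rw [hsup.1 _ _ (Or.inr ⟨j, hj, hne⟩), hsup.1 _ _ (Or.inr ⟨j, hj, hne⟩)]
    rw [hTT]
  have hsum := Equiv.sum_comp (⟨σ, σ, hσσ, hσσ⟩ : Equiv.Perm (Fin k → Fin 2))
    (fun x => chiF x * matF c T x)
  simp only [Equiv.coe_fn_mk] at hsum
  have hsum2 : ∑ x : Fin k → Fin 2, chiF (σ x) * matF c T (σ x) =
      -∑ x : Fin k → Fin 2, chiF x * matF c T x := by
    rw [← Finset.sum_neg_distrib]
    refine Finset.sum_congr rfl fun x _ => ?_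
    rw [hchi, hmat]; ring
  rw [hsum2] at hsum
  linear_combination (-1/2 : ℂ) * hsum

set_option maxHeartbeats 1000000 in
/-- Gadget energy scaling: if `(H′, A)` is a `(η, ε)`-gadget for `H = J Z^{⊗k}` with `H′` a
`k′`-local Hamiltonian, `k′ < k`, and `ε < 2^{−k′} J`, then `‖H′‖ ≥ (2^{−k′} J − ε)/(2η)`. -/
theorem stmt19 {k k' a q : ℕ} (hkk' : k' < k) (J η ε : ℝ) (hJ : 0 < J) (hη : 0 < η)
    (Zk : Matrix (Fin k → Fin 2) (Fin k → Fin 2) ℂ)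
    (hZk : Zk = Matrix.diagonal fun x => ∏ j, (if x j = 0 then (1 : ℂ) else -1))
    (H : Matrix (Fin k → Fin 2) (Fin k → Fin 2) ℂ) (hHdef : H = (J : ℂ) • Zk)
    (H' : Matrix (GBasis k a q) (GBasis k a q) ℂ) (hH'h : H'.IsHermitian)
    (hloc : IsKLocalOp k' H')
    (P : Matrix (Fin a → Fin q) (Fin a → Fin q) ℂ)
    (hPh : P.IsHermitian) (hPi : P * P = P) (hP0 : P ≠ 0)
    (U : Matrix (GBasis k a q) (GBasis k a q) ℂ)
    (hU : U * U.conjTranspose = 1 ∧ U.conjTranspose * U = 1)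
    (hUclose : ‖Matrix.toEuclideanCLM (𝕜 := ℂ) (n := GBasis k a q) (U - 1)‖ ≤ η)
    (P' : Matrix (GBasis k a q) (GBasis k a q) ℂ)
    (hP' : P' = U * (Matrix.of fun x y : GBasis k a q =>
        (if x.1 = y.1 then 1 else 0) * P x.2 y.2) * U.conjTranspose)
    (hε : ‖Matrix.toEuclideanCLM (𝕜 := ℂ) (n := GBasis k a q) (P' * H' * P' -
        U * (Matrix.of fun x y : GBasis k a q => H x.1 y.1 * P x.2 y.2) *
          U.conjTranspose)‖ ≤ ε)
    (hεsmall : ε < (2 : ℝ) ^ (-(k' : ℤ)) * J) :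
    ((2 : ℝ) ^ (-(k' : ℤ)) * J - ε) / (2 * η) ≤
      ‖Matrix.toEuclideanCLM (𝕜 := ℂ) (n := GBasis k a q) H'‖ := by
  show ((2 : ℝ) ^ (-(k' : ℤ)) * J - ε) / (2 * η) ≤ opN H'
  -- nonemptiness
  haveI hne : Nonempty (Fin a → Fin q) := by
    by_contra h
    exact hP0 (by ext s t; exact absurd ⟨s⟩ h)
  haveI : Nonempty (GBasis k a q) := by
    obtain ⟨φ⟩ := hne
    exact ⟨(fun _ => 0, φ)⟩
  set Q : Matrix (GBasis k a q) (GBasis k a q) ℂ :=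
    Matrix.of fun x y : GBasis k a q => (if x.1 = y.1 then 1 else 0) * P x.2 y.2 with hQdef
  set HP : Matrix (GBasis k a q) (GBasis k a q) ℂ :=
    Matrix.of fun x y : GBasis k a q => H x.1 y.1 * P x.2 y.2 with hHPdef
  -- Q is a hermitian projection
  have hQh : Q.conjTranspose = Q := by
    ext z w
    simp only [Matrix.conjTranspose_apply, hQdef, Matrix.of_apply, star_mul']
    by_cases h : z.1 = w.1
    · simp [h, hPh.apply z.2 w.2]
    · have h' : ¬ w.1 = z.1 := fun hh => h hh.symm
      simp [h, h']
  have hQi : Q * Q = Q := by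
    ext z w
    rw [Matrix.mul_apply, Fintype.sum_prod_type]
    simp only [hQdef, Matrix.of_apply]
    rw [Finset.sum_eq_single w.1]
    · by_cases hz : z.1 = w.1
      · simp only [hz, if_pos rfl, one_mul]
        have := congrFun (congrFun hPi z.2) w.2
        rw [Matrix.mul_apply] at this
        simpa using this
      · simp [hz]
    · intro y _ hy
      by_cases hz : z.1 = y <;> simp [hz, hy]
    · simp
  -- unitary algebra
  have halg : P' * H' * P' - U * HP * U.conjTranspose =
      U * (Q * (U.conjTranspose * H' * U) * Q - HP) * U.conjTranspose := by
    rw [hP']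
    noncomm_ring
  have hε1 : opN (Q * (U.conjTranspose * H' * U) * Q - HP) ≤ ε := by
    rw [← norm_conj_eq U _ hU.1 hU.2, ← halg]
    exact hε
  -- commutator bound
  have hUc : opN (U - 1) ≤ η := hUclose
  have hcomm : opN (H' - U.conjTranspose * H' * U) ≤ 2 * η * opN H' := by
    have h1 : H' - U.conjTranspose * H' * U =
        U.conjTranspose * ((U - 1) * H' - H' * (U - 1)) := by
      have e1 : U.conjTranspose * ((U - 1) * H' - H' * (U - 1)) =
          U.conjTranspose * U * H' - U.conjTranspose * H' * U := by noncomm_ring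
      rw [e1, hU.2, one_mul]
    rw [h1]
    have hus : opN U.conjTranspose = 1 := by
      apply norm_unitary; rw [Matrix.conjTranspose_conjTranspose]; exact hU.1
    calc opN (U.conjTranspose * ((U - 1) * H' - H' * (U - 1)))
        ≤ opN U.conjTranspose * opN ((U - 1) * H' - H' * (U - 1)) := opN_mul_le _ _
      _ = opN ((U - 1) * H' - H' * (U - 1)) := by rw [hus, one_mul]
      _ ≤ opN ((U - 1) * H') + opN (H' * (U - 1)) := by
          rw [sub_eq_add_neg]
          have := opN_add_le ((U - 1) * H') (-(H' * (U - 1)))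
          have hneg : opN (-(H' * (U - 1))) = opN (H' * (U - 1)) := by
            unfold opN; rw [map_neg, norm_neg]
          rwa [hneg] at this
      _ ≤ opN (U - 1) * opN H' + opN H' * opN (U - 1) :=
          add_le_add (opN_mul_le _ _) (opN_mul_le _ _)
      _ ≤ 2 * η * opN H' := by nlinarith [opN_nonneg H', opN_nonneg (U - 1)]
  have hQn : opN Q ≤ 1 := norm_proj_le Q hQh hQi
  have hmid : opN (Q * H' * Q - Q * (U.conjTranspose * H' * U) * Q) ≤ 2 * η * opN H' := by
    have h1 : Q * H' * Q - Q * (U.conjTranspose * H' * U) * Q =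
        Q * (H' - U.conjTranspose * H' * U) * Q := by noncomm_ring
    rw [h1]
    calc opN (Q * (H' - U.conjTranspose * H' * U) * Q)
        ≤ opN (Q * (H' - U.conjTranspose * H' * U)) * opN Q := opN_mul_le _ _
      _ ≤ opN Q * opN (H' - U.conjTranspose * H' * U) * opN Q := by
          gcongr
          · exact opN_nonneg _
          · exact opN_mul_le _ _
      _ ≤ opN (H' - U.conjTranspose * H' * U) := by
          nlinarith [opN_nonneg Q, hQn,
            mul_nonneg (opN_nonneg (H' - U.conjTranspose * H' * U))
              (mul_nonneg (sub_nonneg.2 hQn)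
                (by linarith [opN_nonneg Q] : (0:ℝ) ≤ 1 + opN Q))]
      _ ≤ 2 * η * opN H' := hcomm
  set δ : ℝ := ε + 2 * η * opN H' with hδdef
  have hδ : opN (Q * H' * Q - HP) ≤ δ := by
    have h1 : Q * H' * Q - HP = (Q * H' * Q - Q * (U.conjTranspose * H' * U) * Q) +
        (Q * (U.conjTranspose * H' * U) * Q - HP) := (sub_add_sub_cancel _ _ _).symm
    rw [h1]
    calc opN _ ≤ opN (Q * H' * Q - Q * (U.conjTranspose * H' * U) * Q) +
          opN (Q * (U.conjTranspose * H' * U) * Q - HP) := opN_add_le _ _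
      _ ≤ 2 * η * opN H' + ε := add_le_add hmid hε1
      _ = δ := by rw [hδdef]; ring
  -- the vector
  obtain ⟨s0, t0, hP00⟩ : ∃ s t, P s t ≠ 0 := by
    by_contra h
    push_neg at h
    exact hP0 (Matrix.ext h)
  set c : (Fin a → Fin q) → ℂ := fun s => P s t0 with hcdef
  have hPc : ∀ s, ∑ t, P s t * c t = c s := by
    intro s
    have := congrFun (congrFun hPi s) t0
    rw [Matrix.mul_apply] at this
    simpa [hcdef] using this
  set Cc : ℂ := ∑ s, (starRingEnd ℂ) (c s) * c s with hCcdef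
  have hCre : 0 < Cc.re := by
    rw [hCcdef, Complex.re_sum]
    have hterm : ∀ s, ((starRingEnd ℂ) (c s) * c s).re = Complex.normSq (c s) := by
      intro s
      rw [mul_comm, Complex.mul_conj]
      simp
    refine Finset.sum_pos' (fun s _ => by rw [hterm]; exact Complex.normSq_nonneg _)
      ⟨s0, Finset.mem_univ _, ?_⟩
    rw [hterm]
    exact Complex.normSq_pos.mpr hP00
  -- χ and diagonal values
  have hHdiag : ∀ x, H x x = (J : ℂ) * chiF x := by
    intro x
    rw [hHdef, hZk]
    simp [Matrix.diagonal_apply_eq, chiF]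
  -- pointwise estimate
  have hfx : ∀ x, ‖matF c H' x - (J : ℂ) * chiF x * Cc‖ ≤ δ * Cc.re := by
    intro x
    have hadj : ContinuousLinearMap.adjoint (Matrix.toEuclideanCLM (𝕜 := ℂ) Q) =
        Matrix.toEuclideanCLM (𝕜 := ℂ) Q := by
      rw [← ContinuousLinearMap.star_eq_adjoint, ← map_star, Matrix.star_eq_conjTranspose, hQh]
    have hQfix := clm_Q_gvec c P hPc x
    rw [← hQdef] at hQfix
    have e1 : (inner ℂ (gvec c x)
        (Matrix.toEuclideanCLM (𝕜 := ℂ) (Q * H' * Q) (gvec c x)) : ℂ) = matF c H' x := by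
      rw [map_mul, map_mul, ContinuousLinearMap.mul_apply, ContinuousLinearMap.mul_apply,
        hQfix, ← ContinuousLinearMap.adjoint_inner_left, hadj, hQfix, inner_gvec_clm]
    have e2 : (inner ℂ (gvec c x)
        (Matrix.toEuclideanCLM (𝕜 := ℂ) HP (gvec c x)) : ℂ) = H x x * Cc := by
      rw [inner_gvec_clm]
      unfold matF
      rw [hCcdef, Finset.mul_sum]
      refine Finset.sum_congr rfl fun s _ => ?_
      have : ∑ t, (starRingEnd ℂ) (c s) * (HP (x, s) (x, t) * c t) =
          (starRingEnd ℂ) (c s) * (H x x * ∑ t, P s t * c t) := by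
        rw [Finset.mul_sum, Finset.mul_sum]
        refine Finset.sum_congr rfl fun t _ => ?_
        simp only [hHPdef, Matrix.of_apply]
        ring
      rw [this, hPc]
      ring
    have e3 : matF c H' x - H x x * Cc = inner ℂ (gvec c x)
        (Matrix.toEuclideanCLM (𝕜 := ℂ) (Q * H' * Q - HP) (gvec c x)) := by
      rw [map_sub, ContinuousLinearMap.sub_apply, inner_sub_right, e1, e2]
    have e4 := inner_le' (Q * H' * Q - HP) (gvec c x)
    rw [← e3, inner_gvec_gvec, ← hCcdef] at e4
    rw [← hHdiag]
    calc ‖matF c H' x - H x x * Cc‖ ≤ opN (Q * H' * Q - HP) * Cc.re := e4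
      _ ≤ δ * Cc.re := by
          have := hCre.le
          gcongr
  -- Fourier
  have hsum0 : ∑ x : Fin k → Fin 2, chiF x * matF c H' x = 0 := by
    obtain ⟨m, T, S₁, S₂, hc1, hc2, hH'sum⟩ := hloc
    rw [hH'sum]
    have : ∀ x, matF c (∑ i, T i) x = ∑ i, matF c (T i) x := matF_sum c T
    calc ∑ x : Fin k → Fin 2, chiF x * matF c (∑ i, T i) x
        = ∑ x : Fin k → Fin 2, ∑ i, chiF x * matF c (T i) x := by
          refine Finset.sum_congr rfl fun x _ => ?_
          rw [this, Finset.mul_sum]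
      _ = ∑ i, ∑ x : Fin k → Fin 2, chiF x * matF c (T i) x := Finset.sum_comm
      _ = 0 := by
          refine Finset.sum_eq_zero fun i _ => ?_
          exact fourier_vanish c (T i) (S₁ i) (S₂ i)
            (lt_of_le_of_lt (le_trans (Nat.le_add_right _ _) (hc1 i)) hkk') (hc2 i)
  have hcard2 : (Fintype.card (Fin k → Fin 2)) = 2 ^ k := by
    simp [Fintype.card_fun]
  have htotal : ∑ x : Fin k → Fin 2, chiF x * (matF c H' x - (J : ℂ) * chiF x * Cc) =
      -((J : ℂ) * (2 : ℂ) ^ k * Cc) := by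
    have h1 : ∀ x : Fin k → Fin 2, chiF x * (matF c H' x - (J : ℂ) * chiF x * Cc) =
        chiF x * matF c H' x - (J : ℂ) * Cc * (chiF x * chiF x) := by
      intro x; ring
    calc ∑ x : Fin k → Fin 2, chiF x * (matF c H' x - (J : ℂ) * chiF x * Cc)
        = ∑ x : Fin k → Fin 2, (chiF x * matF c H' x - (J : ℂ) * Cc * (chiF x * chiF x)) :=
          Finset.sum_congr rfl fun x _ => h1 x
      _ = (∑ x : Fin k → Fin 2, chiF x * matF c H' x) -
            ∑ x : Fin k → Fin 2, (J : ℂ) * Cc * (chiF x * chiF x) := by rw [Finset.sum_sub_distrib]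
      _ = -((J : ℂ) * (2 : ℂ) ^ k * Cc) := by
          rw [hsum0]
          simp only [chiF_mul_self, mul_one]
          rw [Finset.sum_const, Finset.card_univ, hcard2]
          simp [nsmul_eq_mul]
          push_cast
          ring
  -- norm comparison
  have hbound : J * 2 ^ k * Cc.re ≤ 2 ^ k * (δ * Cc.re) := by
    have h1 : ‖∑ x : Fin k → Fin 2, chiF x * (matF c H' x - (J : ℂ) * chiF x * Cc)‖ ≤
        2 ^ k * (δ * Cc.re) := by
      calc ‖∑ x : Fin k → Fin 2, chiF x * (matF c H' x - (J : ℂ) * chiF x * Cc)‖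
          ≤ ∑ x : Fin k → Fin 2, ‖chiF x * (matF c H' x - (J : ℂ) * chiF x * Cc)‖ :=
            norm_sum_le _ _
        _ ≤ ∑ _x : Fin k → Fin 2, δ * Cc.re := by
            refine Finset.sum_le_sum fun x _ => ?_
            rw [norm_mul, chiF_norm, one_mul]
            exact hfx x
        _ = 2 ^ k * (δ * Cc.re) := by
            rw [Finset.sum_const, Finset.card_univ, hcard2]
            simp [nsmul_eq_mul]
    have h2 : J * 2 ^ k * Cc.re ≤
        ‖∑ x : Fin k → Fin 2, chiF x * (matF c H' x - (J : ℂ) * chiF x * Cc)‖ := by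
      rw [htotal, norm_neg]
      have h3 : ‖(J : ℂ) * (2 : ℂ) ^ k * Cc‖ = J * 2 ^ k * ‖Cc‖ := by
        rw [norm_mul, norm_mul, norm_pow]
        simp [abs_of_pos hJ, Complex.norm_real]
      rw [h3]
      have h4 : Cc.re ≤ ‖Cc‖ := Complex.re_le_norm Cc
      have h5 : (0 : ℝ) ≤ J * 2 ^ k := by positivity
      exact mul_le_mul_of_nonneg_left h4 h5
    linarith
  have hJδ : J ≤ δ := by
    have h2k : (0 : ℝ) < 2 ^ k := by positivity
    nlinarith [mul_pos h2k hCre]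
  -- conclude
  have h2e : (2 : ℝ) ^ (-(k' : ℤ)) ≤ 1 := by
    rw [zpow_neg, zpow_natCast]
    have h1 : (1 : ℝ) ≤ 2 ^ k' := one_le_pow₀ one_le_two
    rw [inv_le_one_iff₀]
    right; exact h1
  rw [div_le_iff₀ (by positivity : (0 : ℝ) < 2 * η)]
  have hx : (2 : ℝ) ^ (-(k' : ℤ)) * J ≤ J := by nlinarith
  rw [hδdef] at hJδ
  linarith
end
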